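/- arXiv:1101.4176 — 7 statements merged into one kernel-verified Lean document; each statement's English description precedes it below -/
import Mathlib

section
/- Let {Ω_i}_{i∈ℕ} be a countable system of closed sets in ℝⁿ with x̄ ∈ ∩_{i=1}^∞ Ω_i. Assume the system is tangentially extremal at x̄, i.e., there exists a bounded sequence {a_i}_{i∈ℕ} ⊂ ℝⁿ such that ∩_{i=1}^∞ [T(x̄;Ω_i) − a_i] = ∅, and assume the nonoverlapping condition ∩_{i=1}^∞ T(x̄;Ω_i) = {0}. Then there exist vectors x*_i ∈ N(0; T(x̄;Ω_i)) (hence x*_i ∈ N(x̄;Ω_i)) for all i ∈ ℕ satisfying Σ_{i=1}^∞ 2^{−i} x*_i = 0 and Σ_{i=1}^∞ 2^{−i} ‖x*_i‖² = 1. -/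
open Filter Topology Set Metric

section Defs
variable {E : Type*} [NormedAddCommGroup E] [NormedSpace ℝ E]

/-- Bouligand–Severi contingent tangent cone. -/
def tcone (Ω : Set E) (x : E) : Set E :=
  {v | ∃ (t : ℕ → ℝ) (w : ℕ → E), (∀ k, 0 < t k) ∧
    Tendsto t atTop (nhds 0) ∧ Tendsto w atTop (nhds v) ∧ ∀ k, x + t k • w k ∈ Ω}
end Defs

section Defs2
variable {E F : Type*} [NormedAddCommGroup E] [InnerProductSpace ℝ E]
  [NormedAddCommGroup F] [InnerProductSpace ℝ F]

/-- Fréchet (regular/pre-) normal cone. -/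
def fnormal (Ω : Set E) (x : E) : Set E :=
  {v | ∀ ε > 0, ∃ δ > 0, ∀ u ∈ Ω, ‖u - x‖ < δ → (inner ℝ v (u - x) : ℝ) ≤ ε * ‖u - x‖}

/-- Limiting (Mordukhovich) normal cone. -/
def lnormal (Ω : Set E) (x : E) : Set E :=
  {v | ∃ xk vk : ℕ → E, (∀ k, xk k ∈ Ω) ∧ (∀ k, vk k ∈ fnormal Ω (xk k)) ∧
    Tendsto xk atTop (nhds x) ∧ Tendsto vk atTop (nhds v)}

/-- Normal cone of convex analysis. -/
def cnormal (Ω : Set E) (x : E) : Set E :=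
  {v | ∀ y ∈ Ω, (inner ℝ v (y - x) : ℝ) ≤ 0}

/-- All finite sums `∑_{i ∈ I} xᵢ` with `xᵢ ∈ Nc i`. -/
def finSums (Nc : ℕ → Set E) : Set E :=
  {v | ∃ (I : Finset ℕ) (xs : ℕ → E), (∀ i ∈ I, xs i ∈ Nc i) ∧ v = ∑ i ∈ I, xs i}

/-- Fréchet normal cone in a product of inner product spaces
(equivalently, w.r.t. the Euclidean product structure). -/
def fnormalP (Ω : Set (E × F)) (z : E × F) : Set (E × F) :=
  {v | ∀ ε > 0, ∃ δ > 0, ∀ u ∈ Ω, ‖u - z‖ < δ →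
    (inner ℝ v.1 (u.1 - z.1) : ℝ) + (inner ℝ v.2 (u.2 - z.2) : ℝ) ≤ ε * ‖u - z‖}

/-- Limiting normal cone in a product of inner product spaces. -/
def lnormalP (Ω : Set (E × F)) (z : E × F) : Set (E × F) :=
  {v | ∃ zk vk : ℕ → E × F, (∀ k, zk k ∈ Ω) ∧ (∀ k, vk k ∈ fnormalP Ω (zk k)) ∧
    Tendsto zk atTop (nhds z) ∧ Tendsto vk atTop (nhds v)}

/-- Epigraph of an extended-real-valued function. -/
def epiSet (φ : E → EReal) : Set (E × ℝ) := {p | φ p.1 ≤ (p.2 : EReal)}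

/-- Basic (limiting, Mordukhovich) subdifferential. -/
noncomputable def bsub (φ : E → EReal) (x : E) : Set E :=
  {v | (v, (-1 : ℝ)) ∈ lnormalP (epiSet φ) (x, (φ x).toReal)}

/-- Singular subdifferential. -/
noncomputable def ssub (φ : E → EReal) (x : E) : Set E :=
  {v | (v, (0 : ℝ)) ∈ lnormalP (epiSet φ) (x, (φ x).toReal)}

/-- Fréchet subdifferential. -/
def fsub (φ : E → EReal) (x : E) : Set E :=
  {v | ∀ ε > 0, ∃ δ > 0, ∀ u, ‖u - x‖ < δ →
    φ x + (((inner ℝ v (u - x) : ℝ) - ε * ‖u - x‖ : ℝ) : EReal) ≤ φ u}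

/-- Fréchet upper subdifferential `∂̂⁺φ(x) = −∂̂(−φ)(x)`. -/
def fsubUpper (φ : E → EReal) (x : E) : Set E := {v | -v ∈ fsub (fun u => -(φ u)) x}
end Defs2


section AuxTangCone
variable {E : Type*} [NormedAddCommGroup E] [NormedSpace ℝ E]

lemma zero_mem_tcone {Ω : Set E} {x : E} (hx : x ∈ Ω) : (0 : E) ∈ tcone Ω x := by
  refine ⟨fun k => 1 / (k + 1), fun _ => 0, fun k => by positivity,
    tendsto_one_div_add_atTop_nhds_zero_nat, tendsto_const_nhds, fun k => by simpa using hx⟩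

lemma tcone_smul {Ω : Set E} {x : E} {v : E} (hv : v ∈ tcone Ω x) {c : ℝ} (hc : 0 < c) :
    c • v ∈ tcone Ω x := by
  obtain ⟨t, w, ht, ht0, hw, hmem⟩ := hv
  refine ⟨fun k => t k / c, fun k => c • w k, fun k => div_pos (ht k) hc,
    by simpa using ht0.div_const c, hw.const_smul c, fun k => ?_⟩
  have : (t k / c) • (c • w k) = t k • w k := by
    rw [smul_smul, div_mul_cancel₀]; exact ne_of_gt hc
  rw [this]; exact hmem k

lemma isClosed_tcone (Ω : Set E) (x : E) : IsClosed (tcone Ω x) := by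
  refine IsSeqClosed.isClosed ?_
  intro vs v hvs hv
  have key : ∀ j : ℕ, ∃ (t : ℝ) (w : E), 0 < t ∧ t < 1 / (j + 1) ∧ ‖w - vs j‖ < 1 / (j + 1) ∧
      x + t • w ∈ Ω := by
    intro j
    obtain ⟨t, w, ht, ht0, hw, hmem⟩ := hvs j
    have hpos : (0:ℝ) < 1 / (j + 1) := by positivity
    have h1 : ∀ᶠ k in atTop, t k < 1 / (j + 1) :=
      ht0.eventually (eventually_lt_nhds hpos) |>.mono (fun k hk => by simpa using hk)
    have h2 : ∀ᶠ k in atTop, ‖w k - vs j‖ < 1 / (j + 1) := by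
      have hn : Tendsto (fun k => ‖w k - vs j‖) atTop (nhds ‖vs j - vs j‖) :=
        ((hw.sub_const (vs j)).norm)
      rw [sub_self, norm_zero] at hn
      exact hn.eventually (eventually_lt_nhds hpos)
    obtain ⟨k, hk1, hk2⟩ := (h1.and h2).exists
    exact ⟨t k, w k, ht k, hk1, hk2, hmem k⟩
  choose t w ht htlt hwlt hmem using key
  refine ⟨t, w, ht, ?_, ?_, hmem⟩
  · exact squeeze_zero (fun j => (ht j).le) (fun j => (htlt j).le)
      tendsto_one_div_add_atTop_nhds_zero_nat
  · rw [tendsto_iff_norm_sub_tendsto_zero]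
    refine squeeze_zero (g := fun j => 1 / (j + 1) + ‖vs j - v‖) (fun j => norm_nonneg _)
      (fun j => ?_) ?_
    · calc ‖w j - v‖ ≤ ‖w j - vs j‖ + ‖vs j - v‖ := norm_sub_le_norm_sub_add_norm_sub _ _ _
        _ ≤ 1 / (j + 1) + ‖vs j - v‖ := by linarith [hwlt j]
    · have h2 : Tendsto (fun j => ‖vs j - v‖) atTop (nhds 0) := by
        rw [← tendsto_iff_norm_sub_tendsto_zero]; exact hv
      simpa using tendsto_one_div_add_atTop_nhds_zero_nat.add h2

lemma infDist_smul_le_cone {T : Set E} (hT : T.Nonempty) {r : ℝ} (hr : 0 < r)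
    (hcone : ∀ u ∈ T, ∀ s : ℝ, 0 < s → s • u ∈ T) (y : E) :
    infDist (r • y) T ≤ r * infDist y T := by
  apply le_of_forall_pos_le_add
  intro ε hε
  have h1 : infDist y T < infDist y T + ε / r := by
    have : 0 < ε / r := by positivity
    linarith
  obtain ⟨u, huT, hdu⟩ := (infDist_lt_iff hT).1 h1
  calc infDist (r • y) T ≤ dist (r • y) (r • u) := infDist_le_dist_of_mem (hcone u huT r hr)
    _ = r * dist y u := by
        rw [dist_smul₀, Real.norm_eq_abs, abs_of_pos hr]
    _ ≤ r * (infDist y T + ε / r) := by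
        exact mul_le_mul_of_nonneg_left hdu.le hr.le
    _ = r * infDist y T + ε := by field_simp

lemma infDist_smul_cone {T : Set E} (hT : T.Nonempty) {r : ℝ} (hr : 0 < r)
    (hcone : ∀ u ∈ T, ∀ s : ℝ, 0 < s → s • u ∈ T) (y : E) :
    infDist (r • y) T = r * infDist y T := by
  refine le_antisymm (infDist_smul_le_cone hT hr hcone y) ?_
  have h2 := infDist_smul_le_cone hT (by positivity : (0:ℝ) < r⁻¹) hcone (r • y)
  rw [smul_smul, inv_mul_cancel₀ (ne_of_gt hr), one_smul] at h2
  have := mul_le_mul_of_nonneg_left h2 hr.le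
  rw [← mul_assoc, mul_inv_cancel₀ (ne_of_gt hr), one_mul] at this
  linarith

end AuxTangCone

section AuxNormal
variable {E : Type*} [NormedAddCommGroup E] [InnerProductSpace ℝ E]

lemma zero_mem_fnormal (Ω : Set E) (x : E) : (0:E) ∈ fnormal Ω x := by
  intro ε hε
  exact ⟨1, one_pos, fun u hu hd => by
    rw [inner_zero_left]; exact mul_nonneg hε.le (norm_nonneg _)⟩

lemma prox_mem_fnormal {Ω : Set E} {z w : E}
    (hmin : ∀ u ∈ Ω, dist z w ≤ dist z u) : z - w ∈ fnormal Ω w := by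
  intro ε hε
  refine ⟨2 * ε, by positivity, fun u hu hdu => ?_⟩
  have h1 : ‖z - w‖ ^ 2 ≤ ‖z - u‖ ^ 2 := by
    have := hmin u hu
    rw [dist_eq_norm, dist_eq_norm] at this
    nlinarith [norm_nonneg (z - w), norm_nonneg (z - u)]
  have h2 : z - u = (z - w) + -(u - w) := by abel
  rw [h2, norm_add_sq_real] at h1
  have h3 : (inner ℝ (z - w) (u - w) : ℝ) ≤ ‖u - w‖ ^ 2 / 2 := by
    rw [inner_neg_right, norm_neg] at h1; linarith
  calc (inner ℝ (z - w) (u - w) : ℝ) ≤ ‖u - w‖ ^ 2 / 2 := h3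
    _ ≤ ε * ‖u - w‖ := by nlinarith [norm_nonneg (u - w)]

lemma fnormal_smul {Ω : Set E} {x v : E} (hv : v ∈ fnormal Ω x) {c : ℝ} (hc : 0 < c) :
    c • v ∈ fnormal Ω x := by
  intro ε hε
  obtain ⟨δ, hδ, h⟩ := hv (ε / c) (by positivity)
  refine ⟨δ, hδ, fun u hu hd => ?_⟩
  rw [real_inner_smul_left]
  calc c * (inner ℝ v (u - x) : ℝ) ≤ c * (ε / c * ‖u - x‖) := by
        exact mul_le_mul_of_nonneg_left (h u hu hd) hc.le
    _ = ε * ‖u - x‖ := by field_simp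

lemma fnormal_translate {S : Set E} {a w v : E}
    (hv : v ∈ fnormal ((fun x => x - a) '' S) w) : v ∈ fnormal S (w + a) := by
  intro ε hε
  obtain ⟨δ, hδ, h⟩ := hv ε hε
  refine ⟨δ, hδ, fun u hu hd => ?_⟩
  have h1 : u - a ∈ (fun x => x - a) '' S := ⟨u, hu, rfl⟩
  have h2 : u - a - w = u - (w + a) := by abel
  have := h (u - a) h1 (by rw [h2]; exact hd)
  rwa [h2] at this

lemma fnormal_smul_point {T : Set E} {p v : E}
    (hcone : ∀ u ∈ T, ∀ s : ℝ, 0 < s → s • u ∈ T)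
    (hv : v ∈ fnormal T p) {t : ℝ} (ht : 0 < t) : v ∈ fnormal T (t • p) := by
  intro ε hε
  obtain ⟨δ, hδ, h⟩ := hv ε hε
  refine ⟨t * δ, by positivity, fun u hu hd => ?_⟩
  have hu' : t⁻¹ • u ∈ T := hcone u hu t⁻¹ (by positivity)
  have hkey : t⁻¹ • u - p = t⁻¹ • (u - t • p) := by
    rw [smul_sub, smul_smul, inv_mul_cancel₀ (ne_of_gt ht), one_smul]
  have hnorm : ‖t⁻¹ • u - p‖ = t⁻¹ * ‖u - t • p‖ := by
    rw [hkey, norm_smul, Real.norm_eq_abs, abs_of_pos (by positivity)]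
  have hd' : ‖t⁻¹ • u - p‖ < δ := by
    rw [hnorm]
    calc t⁻¹ * ‖u - t • p‖ < t⁻¹ * (t * δ) := by
          exact mul_lt_mul_of_pos_left hd (by positivity)
      _ = δ := by field_simp
  have hle := h (t⁻¹ • u) hu' hd'
  rw [hkey, real_inner_smul_right] at hle
  have hns : ‖t⁻¹ • (u - t • p)‖ = t⁻¹ * ‖u - t • p‖ := by
    rw [norm_smul, Real.norm_eq_abs, abs_of_pos (by positivity)]
  rw [hns] at hle
  have htt : t * t⁻¹ = 1 := mul_inv_cancel₀ (ne_of_gt ht)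
  nlinarith [mul_le_mul_of_nonneg_left hle ht.le]

lemma fnormal_point_mem_lnormal_zero {T : Set E} {p v : E} (hp : p ∈ T)
    (hcone : ∀ u ∈ T, ∀ s : ℝ, 0 < s → s • u ∈ T)
    (hv : v ∈ fnormal T p) : v ∈ lnormal T 0 := by
  refine ⟨fun k => (1 / (k + 1) : ℝ) • p, fun _ => v,
    fun k => hcone p hp _ (by positivity),
    fun k => fnormal_smul_point hcone hv (by positivity), ?_, tendsto_const_nhds⟩
  have := (tendsto_one_div_add_atTop_nhds_zero_nat (𝕜 := ℝ)).smul_const p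
  simpa using this

lemma lnormal_closed {Ω : Set E} {x : E} {vj : ℕ → E} {v : E}
    (hvj : ∀ j, vj j ∈ lnormal Ω x) (hv : Tendsto vj atTop (nhds v)) :
    v ∈ lnormal Ω x := by
  have key : ∀ j : ℕ, ∃ (y : E) (u : E), y ∈ Ω ∧ u ∈ fnormal Ω y ∧
      dist y x < 1 / (j + 1) ∧ dist u (vj j) < 1 / (j + 1) := by
    intro j
    obtain ⟨xk, vk, hxk, hvk, hx, hvv⟩ := hvj j
    have hpos : (0:ℝ) < 1 / (j + 1) := by positivity
    have h1 := (tendsto_iff_dist_tendsto_zero.1 hx).eventually (eventually_lt_nhds hpos)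
    have h2 := (tendsto_iff_dist_tendsto_zero.1 hvv).eventually (eventually_lt_nhds hpos)
    obtain ⟨k, hk1, hk2⟩ := (h1.and h2).exists
    exact ⟨xk k, vk k, hxk k, hvk k, hk1, hk2⟩
  choose y u hy hu hyd hud using key
  refine ⟨y, u, hy, hu, ?_, ?_⟩
  · rw [tendsto_iff_dist_tendsto_zero]
    exact squeeze_zero (fun j => dist_nonneg) (fun j => (hyd j).le)
      tendsto_one_div_add_atTop_nhds_zero_nat
  · rw [tendsto_iff_dist_tendsto_zero]
    refine squeeze_zero (g := fun j => 1 / (j + 1) + dist (vj j) v) (fun j => dist_nonneg)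
      (fun j => ?_) ?_
    · calc dist (u j) v ≤ dist (u j) (vj j) + dist (vj j) v := dist_triangle _ _ _
        _ ≤ 1 / (j + 1) + dist (vj j) v := by linarith [hud j]
    · have h2 : Tendsto (fun j => dist (vj j) v) atTop (nhds 0) :=
        tendsto_iff_dist_tendsto_zero.1 hv
      simpa using tendsto_one_div_add_atTop_nhds_zero_nat.add h2

variable [FiniteDimensional ℝ E]

/-- Key lemma: a Fréchet normal to the contingent cone at one of its points is a
limiting normal to the set at the reference point. -/
lemma fnormal_tcone_mem_lnormal {Ω : Set E} {xb : E} (hΩ : IsClosed Ω) (hxb : xb ∈ Ω)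
    {p v : E} (hp : p ∈ tcone Ω xb) (hv : v ∈ fnormal (tcone Ω xb) p) :
    v ∈ lnormal Ω xb := by
  by_cases hv0 : v = 0
  · exact hv0 ▸ ⟨fun _ => xb, fun _ => 0, fun _ => hxb, fun _ => zero_mem_fnormal Ω xb,
      tendsto_const_nhds, tendsto_const_nhds⟩
  have main : ∀ ε > 0, ∃ vb ∈ lnormal Ω xb, ‖vb - v‖ ≤ 2 * ε := by
    intro ε hε
    obtain ⟨δ, hδ, hδh⟩ := hv ε hε
    set γ : ℝ := δ / (2 * ‖v‖ + 1) with hγdef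
    have hγ : 0 < γ := by positivity
    have hγδ : 2 * γ * ‖v‖ < δ := by
      have hc : (0:ℝ) < 2 * ‖v‖ + 1 := by positivity
      rw [hγdef]
      calc 2 * (δ / (2 * ‖v‖ + 1)) * ‖v‖ = δ * (2 * ‖v‖) / (2 * ‖v‖ + 1) := by ring
        _ < δ := by rw [div_lt_iff₀ hc]; nlinarith [norm_nonneg v]
    obtain ⟨t, w, htpos, ht0, hw, hmem⟩ := hp
    set z : ℕ → E := fun k => xb + t k • (w k + γ • v) with hzdef
    have hnear : ∀ k, ∃ u ∈ Ω, infDist (z k) Ω = dist (z k) u :=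
      fun k => hΩ.exists_infDist_eq_dist ⟨xb, hxb⟩ (z k)
    choose u huΩ hud using hnear
    have humin : ∀ k, ∀ y ∈ Ω, dist (z k) (u k) ≤ dist (z k) y := by
      intro k y hy
      rw [← hud k]; exact infDist_le_dist_of_mem hy
    set q : ℕ → E := fun k => (t k)⁻¹ • (u k - xb) with hqdef
    have huq : ∀ k, u k = xb + t k • q k := by
      intro k
      rw [hqdef]
      simp only [smul_smul, mul_inv_cancel₀ (ne_of_gt (htpos k)), one_smul]
      abel
    have hest : ∀ k, ‖w k + γ • v - q k‖ ≤ γ * ‖v‖ := by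
      intro k
      have h1 : dist (z k) (u k) ≤ dist (z k) (xb + t k • w k) :=
        humin k _ (hmem k)
      have h2 : dist (z k) (xb + t k • w k) = t k * (γ * ‖v‖) := by
        rw [hzdef, dist_eq_norm]
        simp only []
        rw [show xb + t k • (w k + γ • v) - (xb + t k • w k) = t k • (γ • v) by
          rw [smul_add]; abel]
        rw [norm_smul, norm_smul, Real.norm_eq_abs, Real.norm_eq_abs,
          abs_of_pos (htpos k), abs_of_pos hγ]
      have h3 : dist (z k) (u k) = t k * ‖w k + γ • v - q k‖ := by
        rw [dist_eq_norm, hzdef, huq k]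
        simp only []
        rw [show xb + t k • (w k + γ • v) - (xb + t k • q k) = t k • (w k + γ • v - q k) by
          rw [smul_sub]; abel]
        rw [norm_smul, Real.norm_eq_abs, abs_of_pos (htpos k)]
      rw [h3, h2] at h1
      exact le_of_mul_le_mul_left h1 (htpos k)
    obtain ⟨W, hW⟩ := hw.norm.bddAbove_range
    have hWmem : ∀ k, ‖w k‖ ≤ W := fun k => hW ⟨k, rfl⟩
    have hqb : ∀ k, q k ∈ closedBall (0 : E) (W + 2 * γ * ‖v‖) := by
      intro k
      rw [mem_closedBall, dist_zero_right]
      have := hest k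
      have h1 : ‖q k‖ ≤ ‖w k + γ • v‖ + ‖w k + γ • v - q k‖ := by
        calc ‖q k‖ = ‖(w k + γ • v) - (w k + γ • v - q k)‖ := by rw [sub_sub_cancel]
          _ ≤ ‖w k + γ • v‖ + ‖w k + γ • v - q k‖ := norm_sub_le _ _
      have h2 : ‖w k + γ • v‖ ≤ W + γ * ‖v‖ := by
        calc ‖w k + γ • v‖ ≤ ‖w k‖ + ‖γ • v‖ := norm_add_le _ _
          _ ≤ W + γ * ‖v‖ := by
              rw [norm_smul, Real.norm_eq_abs, abs_of_pos hγ]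
              linarith [hWmem k]
      linarith
    obtain ⟨qlim, -, φ, hφ, hqφ⟩ :=
      tendsto_subseq_of_bounded (isBounded_closedBall) hqb
    have hqlimT : qlim ∈ tcone Ω xb := by
      refine ⟨t ∘ φ, q ∘ φ, fun j => htpos (φ j), ht0.comp hφ.tendsto_atTop, hqφ, fun j => ?_⟩
      show xb + t (φ j) • q (φ j) ∈ Ω
      rw [← huq (φ j)]; exact huΩ (φ j)
    have hwφ : Tendsto (fun j => w (φ j)) atTop (nhds p) := hw.comp hφ.tendsto_atTop
    have hlim : Tendsto (fun j => w (φ j) + γ • v - q (φ j)) atTop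
        (nhds (p + γ • v - qlim)) := (hwφ.add_const (γ • v)).sub hqφ
    have hqest : ‖p + γ • v - qlim‖ ≤ γ * ‖v‖ :=
      le_of_tendsto hlim.norm (Eventually.of_forall (fun j => hest (φ j)))
    have hqp : ‖qlim - p‖ ≤ 2 * γ * ‖v‖ := by
      have : qlim - p = -(p + γ • v - qlim) + γ • v := by abel
      rw [this]
      calc ‖-(p + γ • v - qlim) + γ • v‖ ≤ ‖-(p + γ • v - qlim)‖ + ‖γ • v‖ := norm_add_le _ _
        _ ≤ 2 * γ * ‖v‖ := by
            rw [norm_neg, norm_smul, Real.norm_eq_abs, abs_of_pos hγ]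
            linarith
    have hinner_lb : ‖p - qlim‖ ^ 2 ≤ 2 * γ * (inner ℝ v (qlim - p) : ℝ) := by
      have hsq : ‖p + γ • v - qlim‖ ^ 2 ≤ (γ * ‖v‖) ^ 2 := by
        have h0 : (0:ℝ) ≤ γ * ‖v‖ := by positivity
        nlinarith [hqest, norm_nonneg (p + γ • v - qlim)]
      have hre : p + γ • v - qlim = (p - qlim) + γ • v := by abel
      rw [hre, norm_add_sq_real, real_inner_smul_right, norm_smul, Real.norm_eq_abs,
        abs_of_pos hγ] at hsq
      have hflip : (inner ℝ (p - qlim) v : ℝ) = -(inner ℝ v (qlim - p) : ℝ) := by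
        rw [real_inner_comm, ← inner_neg_right, neg_sub]
      rw [hflip] at hsq
      nlinarith
    have hub : (inner ℝ v (qlim - p) : ℝ) ≤ ε * ‖qlim - p‖ := by
      apply hδh qlim hqlimT
      calc ‖qlim - p‖ ≤ 2 * γ * ‖v‖ := hqp
        _ < δ := hγδ
    have hpq_small : ‖p - qlim‖ ≤ 2 * γ * ε := by
      have hA : ‖p - qlim‖ ^ 2 ≤ 2 * γ * ε * ‖p - qlim‖ := by
        have h1 : (inner ℝ v (qlim - p) : ℝ) ≤ ε * ‖p - qlim‖ := by
          rw [norm_sub_rev]; exact hub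
        have h2 := mul_le_mul_of_nonneg_left h1 (by positivity : (0:ℝ) ≤ 2 * γ)
        calc ‖p - qlim‖ ^ 2 ≤ 2 * γ * (inner ℝ v (qlim - p) : ℝ) := hinner_lb
          _ ≤ 2 * γ * (ε * ‖p - qlim‖) := h2
          _ = 2 * γ * ε * ‖p - qlim‖ := by ring
      rcases eq_or_lt_of_le (norm_nonneg (p - qlim)) with h0 | h0
      · rw [← h0]; positivity
      · nlinarith
    refine ⟨γ⁻¹ • (p + γ • v - qlim), ?_, ?_⟩
    · refine ⟨fun j => u (φ j), fun j => (t (φ j) * γ)⁻¹ • (z (φ j) - u (φ j)),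
        fun j => huΩ (φ j), fun j => ?_, ?_, ?_⟩
      · exact fnormal_smul (prox_mem_fnormal (humin (φ j)))
          (by have := htpos (φ j); positivity)
      · have : Tendsto (fun j => t (φ j) • q (φ j)) atTop (nhds ((0:ℝ) • qlim)) :=
          (ht0.comp hφ.tendsto_atTop).smul hqφ
        rw [zero_smul] at this
        have h2 : Tendsto (fun j => xb + t (φ j) • q (φ j)) atTop (nhds (xb + 0)) :=
          tendsto_const_nhds.add this
        rw [add_zero] at h2
        exact h2.congr (fun j => by rw [← huq (φ j)])
      · have heq : ∀ j, (t (φ j) * γ)⁻¹ • (z (φ j) - u (φ j))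
            = γ⁻¹ • (w (φ j) + γ • v - q (φ j)) := by
          intro j
          rw [hzdef, huq (φ j)]
          simp only []
          rw [show xb + t (φ j) • (w (φ j) + γ • v) - (xb + t (φ j) • q (φ j))
              = t (φ j) • (w (φ j) + γ • v - q (φ j)) by rw [smul_sub]; abel]
          rw [smul_smul]
          congr 1
          have ht' : t (φ j) ≠ 0 := ne_of_gt (htpos (φ j))
          have hγ' : γ ≠ 0 := ne_of_gt hγ
          field_simp
        rw [show (fun j => (t (φ j) * γ)⁻¹ • (z (φ j) - u (φ j)))
            = fun j => γ⁻¹ • (w (φ j) + γ • v - q (φ j)) from funext heq]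
        exact hlim.const_smul γ⁻¹
    · have heqv : γ⁻¹ • (p + γ • v - qlim) - v = γ⁻¹ • (p - qlim) := by
        rw [show p + γ • v - qlim = (p - qlim) + γ • v by abel, smul_add, smul_smul,
          inv_mul_cancel₀ (ne_of_gt hγ), one_smul, add_sub_cancel_right]
      rw [heqv, norm_smul, Real.norm_eq_abs, abs_of_pos (by positivity : (0:ℝ) < γ⁻¹)]
      calc γ⁻¹ * ‖p - qlim‖ ≤ γ⁻¹ * (2 * γ * ε) := by
            exact mul_le_mul_of_nonneg_left hpq_small (by positivity)
        _ = 2 * ε := by field_simp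
  have key : ∀ j : ℕ, ∃ vb ∈ lnormal Ω xb, ‖vb - v‖ ≤ 2 * (1 / (j + 1)) :=
    fun j => main (1 / (j + 1)) (by positivity)
  choose vb hvb hvbd using key
  refine lnormal_closed hvb ?_
  rw [tendsto_iff_norm_sub_tendsto_zero]
  refine squeeze_zero (fun j => norm_nonneg _) hvbd ?_
  simpa using (tendsto_one_div_add_atTop_nhds_zero_nat (𝕜 := ℝ)).const_mul 2

end AuxNormal

set_option maxHeartbeats 2000000 in
/-- **Tangential extremal principle** (Theorem 2.1).  If a countable system of closed
sets in `ℝⁿ` is tangentially extremal at `xb` and the tangent cones intersect only at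
the origin, then there are normal vectors `x*ᵢ ∈ N(0;T(xb;Ωᵢ)) ⊆ N(xb;Ωᵢ)` with
`∑ 2⁻ⁱ x*ᵢ = 0` and `∑ 2⁻ⁱ ‖x*ᵢ‖² = 1`. -/
theorem tangential_extremal_principle {n : ℕ}
    (Ω : ℕ → Set (EuclideanSpace ℝ (Fin n))) (xb : EuclideanSpace ℝ (Fin n))
    (hcl : ∀ i, IsClosed (Ω i)) (hxb : ∀ i, xb ∈ Ω i)
    (a : ℕ → EuclideanSpace ℝ (Fin n)) (M : ℝ) (hbdd : ∀ i, ‖a i‖ ≤ M)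
    (htext : (⋂ i, ((fun v => v - a i) '' tcone (Ω i) xb)) = ∅)
    (hnonover : (⋂ i, tcone (Ω i) xb) = {0}) :
    ∃ xs : ℕ → EuclideanSpace ℝ (Fin n),
      (∀ i, xs i ∈ lnormal (tcone (Ω i) xb) 0 ∧ xs i ∈ lnormal (Ω i) xb) ∧
      Tendsto (fun m => ∑ i ∈ Finset.range m, ((1/2 : ℝ) ^ (i + 1)) • xs i)
        atTop (nhds 0) ∧
      Tendsto (fun m => ∑ i ∈ Finset.range m, ((1/2 : ℝ) ^ (i + 1)) * ‖xs i‖ ^ 2)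
        atTop (nhds 1) := by
  classical
  -- abbreviations
  set T : ℕ → Set (EuclideanSpace ℝ (Fin n)) := fun i => tcone (Ω i) xb with hTdef
  set Λ : ℕ → Set (EuclideanSpace ℝ (Fin n)) := fun i => (fun v => v - a i) '' T i with hΛdef
  have hT0 : ∀ i, (0 : EuclideanSpace ℝ (Fin n)) ∈ T i := fun i => zero_mem_tcone (hxb i)
  have htextΛ : (⋂ i, Λ i) = ∅ := htext
  have hnonoverT : (⋂ i, T i) = {(0 : EuclideanSpace ℝ (Fin n))} := hnonover
  -- dimension zero is impossible
  rcases Nat.eq_zero_or_pos n with hn | hn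
  · exfalso
    subst hn
    have h0 : (0 : EuclideanSpace ℝ (Fin 0)) ∈ ⋂ i, Λ i :=
      mem_iInter.2 fun i => ⟨0, hT0 i, Subsingleton.elim _ _⟩
    rw [htextΛ] at h0
    exact h0
  have hntriv : Nontrivial (EuclideanSpace ℝ (Fin n)) := by
    apply nontrivial_of_ne 0 (EuclideanSpace.single ⟨0, hn⟩ 1)
    intro h
    have := congrArg (fun v : EuclideanSpace ℝ (Fin n) => v ⟨0, hn⟩) h
    simp [EuclideanSpace.single] at this
  have hM0 : (0:ℝ) ≤ M := le_trans (norm_nonneg (a 0)) (hbdd 0)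
  have hTclosed : ∀ i, IsClosed (T i) := fun i => isClosed_tcone _ _
  have hTcone : ∀ i, ∀ u ∈ T i, ∀ s : ℝ, 0 < s → s • u ∈ T i :=
    fun i u hu s hs => tcone_smul hu hs
  have hTne : ∀ i, (T i).Nonempty := fun i => ⟨0, hT0 i⟩
  have hΛclosed : ∀ i, IsClosed (Λ i) := by
    intro i
    have he : Λ i = (fun v => v + a i) ⁻¹' (T i) := by
      ext y
      constructor
      · rintro ⟨x, hx, rfl⟩
        have he2 : x - a i + a i = x := by abel
        show x - a i + a i ∈ T i
        rwa [he2]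
      · intro hy
        have he2 : y + a i - a i = y := by abel
        exact ⟨y + a i, hy, he2⟩
    rw [he]
    exact (hTclosed i).preimage (continuous_id.add continuous_const)
  have hΛne : ∀ i, (Λ i).Nonempty := fun i => ⟨(0:EuclideanSpace ℝ (Fin n)) - a i, 0, hT0 i, rfl⟩
  have hiso : ∀ i, Isometry (fun v : EuclideanSpace ℝ (Fin n) => v - a i) := by
    intro i
    apply Isometry.of_dist_eq
    intro x y
    simp [dist_eq_norm, sub_sub_sub_cancel_right]
  have hΛinf : ∀ i (x : EuclideanSpace ℝ (Fin n)),
      infDist x (Λ i) = infDist (x + a i) (T i) := by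
    intro i x
    have h := infDist_image (x := x + a i) (t := T i) (hiso i)
    rw [add_sub_cancel_right] at h
    exact h
  have hdistΛ_le : ∀ i (x : EuclideanSpace ℝ (Fin n)), infDist x (Λ i) ≤ ‖x‖ + M := by
    intro i x
    rw [hΛinf i x]
    calc infDist (x + a i) (T i) ≤ dist (x + a i) 0 := infDist_le_dist_of_mem (hT0 i)
      _ = ‖x + a i‖ := by rw [dist_zero_right]
      _ ≤ ‖x‖ + M := le_trans (norm_add_le _ _) (by linarith [hbdd i])
  have hdistT_le : ∀ i (x : EuclideanSpace ℝ (Fin n)), infDist x (T i) ≤ ‖x‖ := by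
    intro i x
    calc infDist x (T i) ≤ dist x 0 := infDist_le_dist_of_mem (hT0 i)
      _ = ‖x‖ := by rw [dist_zero_right]
  -- the geometric weights
  set g : ℕ → ℝ := fun i => (1/2:ℝ)^(i+1) with hgdef
  have hgpos : ∀ i, 0 < g i := fun i => by positivity
  have hgHasSum : HasSum g 1 := by
    have h2 := (hasSum_geometric_of_lt_one (by norm_num : (0:ℝ) ≤ 1/2)
      (by norm_num : (1/2:ℝ) < 1)).mul_right (1/2)
    have he : (fun i : ℕ => (1/2:ℝ)^i * (1/2)) = g := by
      funext i; rw [hgdef]; exact (pow_succ (1/2:ℝ) i).symm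
    rw [he] at h2
    norm_num at h2
    exact h2
  have hg : Summable g := hgHasSum.summable
  have hsummΛ : ∀ x : EuclideanSpace ℝ (Fin n),
      Summable (fun i => g i * (infDist x (Λ i))^2) := by
    intro x
    refine Summable.of_nonneg_of_le (fun i => by positivity) (fun i => ?_)
      (hg.mul_right ((‖x‖+M)^2))
    refine mul_le_mul_of_nonneg_left ?_ (hgpos i).le
    have h1 := hdistΛ_le i x
    have h2 : (0:ℝ) ≤ infDist x (Λ i) := infDist_nonneg
    nlinarith
  have hsummT : ∀ x : EuclideanSpace ℝ (Fin n),
      Summable (fun i => g i * (infDist x (T i))^2) := by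
    intro x
    refine Summable.of_nonneg_of_le (fun i => by positivity) (fun i => ?_)
      (hg.mul_right (‖x‖^2))
    refine mul_le_mul_of_nonneg_left ?_ (hgpos i).le
    have h1 := hdistT_le i x
    have h2 : (0:ℝ) ≤ infDist x (T i) := infDist_nonneg
    nlinarith
  set ψ : EuclideanSpace ℝ (Fin n) → ℝ := fun x => ∑' i, g i * (infDist x (Λ i))^2 with hψdef
  set G : EuclideanSpace ℝ (Fin n) → ℝ := fun y => ∑' i, g i * (infDist y (T i))^2 with hGdef
  -- continuity of ψ on closed balls
  have hψcont : ∀ R : ℝ, ContinuousOn ψ (closedBall (0:EuclideanSpace ℝ (Fin n)) R) := by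
    intro R
    rw [continuousOn_iff_continuous_restrict]
    refine continuous_tsum (u := fun i => g i * (R + M)^2)
      (f := fun i (x : closedBall (0:EuclideanSpace ℝ (Fin n)) R) =>
        g i * (infDist (x : EuclideanSpace ℝ (Fin n)) (Λ i))^2)
      (fun i => ?_) (hg.mul_right _) (fun i x => ?_)
    · exact continuous_const.mul
        (((continuous_infDist_pt (Λ i)).comp continuous_subtype_val).pow 2)
    · have hx : ‖(x : EuclideanSpace ℝ (Fin n))‖ ≤ R := by
        have := x.2
        rwa [mem_closedBall, dist_zero_right] at this
      have h1 : infDist (x : EuclideanSpace ℝ (Fin n)) (Λ i) ≤ R + M :=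
        le_trans (hdistΛ_le i x) (by linarith)
      have h2 : (0:ℝ) ≤ infDist (x : EuclideanSpace ℝ (Fin n)) (Λ i) := infDist_nonneg
      rw [Real.norm_eq_abs, abs_of_nonneg (by positivity)]
      refine mul_le_mul_of_nonneg_left ?_ (hgpos i).le
      nlinarith
  have hGcont : ContinuousOn G (closedBall (0:EuclideanSpace ℝ (Fin n)) 1) := by
    rw [continuousOn_iff_continuous_restrict]
    refine continuous_tsum (u := fun i => g i * 1)
      (f := fun i (x : closedBall (0:EuclideanSpace ℝ (Fin n)) 1) =>
        g i * (infDist (x : EuclideanSpace ℝ (Fin n)) (T i))^2)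
      (fun i => ?_) (hg.mul_right _) (fun i x => ?_)
    · exact continuous_const.mul
        (((continuous_infDist_pt (T i)).comp continuous_subtype_val).pow 2)
    · have hx : ‖(x : EuclideanSpace ℝ (Fin n))‖ ≤ 1 := by
        have := x.2
        rwa [mem_closedBall, dist_zero_right] at this
      have h1 : infDist (x : EuclideanSpace ℝ (Fin n)) (T i) ≤ 1 :=
        le_trans (hdistT_le i x) hx
      have h2 : (0:ℝ) ≤ infDist (x : EuclideanSpace ℝ (Fin n)) (T i) := infDist_nonneg
      rw [Real.norm_eq_abs, abs_of_nonneg (by positivity)]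
      refine mul_le_mul_of_nonneg_left ?_ (hgpos i).le
      nlinarith
  -- minimum of G over the unit sphere is positive
  have hsne : (sphere (0 : EuclideanSpace ℝ (Fin n)) 1).Nonempty :=
    NormedSpace.sphere_nonempty.2 zero_le_one
  obtain ⟨y0, hy0s, hy0min⟩ := (isCompact_sphere (0 : EuclideanSpace ℝ (Fin n)) 1).exists_isMinOn
    hsne (hGcont.mono sphere_subset_closedBall)
  have hcpos0 : 0 < G y0 := by
    have hnn : 0 ≤ G y0 := tsum_nonneg (fun i => by positivity)
    rcases hnn.eq_or_lt with h0 | h0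
    · exfalso
      have hy0T : ∀ i, y0 ∈ T i := by
        intro i
        have h1 := Summable.le_tsum (hsummT y0) i (fun j _ => by positivity)
        have h2 : (0:ℝ) ≤ g i * (infDist y0 (T i))^2 := by positivity
        have h3 : g i * (infDist y0 (T i))^2 = 0 := le_antisymm (by rw [hGdef] at h0; linarith) h2
        have h4 : infDist y0 (T i) = 0 := by
          rcases mul_eq_zero.1 h3 with h | h
          · exact absurd h (hgpos i).ne'
          · exact pow_eq_zero_iff (by norm_num) |>.1 h
        exact ((hTclosed i).mem_iff_infDist_zero (hTne i)).2 h4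
      have hmem : y0 ∈ ⋂ i, T i := mem_iInter.2 hy0T
      rw [hnonoverT] at hmem
      have : ‖y0‖ = 1 := mem_sphere_zero_iff_norm.1 hy0s
      rw [mem_singleton_iff] at hmem
      rw [hmem, norm_zero] at this
      norm_num at this
    · exact h0
  obtain ⟨c, hcpos, hcmin⟩ : ∃ c : ℝ, 0 < c ∧
      ∀ y ∈ sphere (0:EuclideanSpace ℝ (Fin n)) 1, c ≤ G y :=
    ⟨G y0, hcpos0, fun y hy => isMinOn_iff.1 hy0min y hy⟩
  have hc0 : c ≠ 0 := ne_of_gt hcpos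
  -- coercivity
  have hcoer : ∀ x : EuclideanSpace ℝ (Fin n), x ≠ 0 → c * ‖x‖^2 / 2 - M^2 ≤ ψ x := by
    intro x hx
    have hr : (0:ℝ) < ‖x‖ := norm_pos_iff.2 hx
    set y : EuclideanSpace ℝ (Fin n) := ‖x‖⁻¹ • x with hydef
    have hxy : x = ‖x‖ • y := by
      rw [hydef, smul_smul, mul_inv_cancel₀ (ne_of_gt hr), one_smul]
    have hys : y ∈ sphere (0 : EuclideanSpace ℝ (Fin n)) 1 := by
      rw [mem_sphere_zero_iff_norm, hydef, norm_smul, Real.norm_eq_abs,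
        abs_of_pos (by positivity), inv_mul_cancel₀ (ne_of_gt hr)]
    have hcy : c ≤ G y := hcmin y hys
    have hpt : ∀ i, g i * (‖x‖^2 / 2 * (infDist y (T i))^2 - M^2)
        ≤ g i * (infDist x (Λ i))^2 := by
      intro i
      refine mul_le_mul_of_nonneg_left ?_ (hgpos i).le
      have h1 : infDist x (T i) ≤ infDist x (Λ i) + M := by
        have h2 : infDist x (T i) ≤ infDist (x + a i) (T i) + dist x (x + a i) :=
          infDist_le_infDist_add_dist
        have h3 : dist x (x + a i) ≤ M := by
          rw [dist_eq_norm]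
          simpa using hbdd i
        rw [← hΛinf i x] at h2
        linarith
      have h4 : infDist x (T i) = ‖x‖ * infDist y (T i) := by
        nth_rewrite 1 [hxy]
        exact infDist_smul_cone (hTne i) hr (hTcone i) y
      have h5 : (0:ℝ) ≤ infDist x (Λ i) := infDist_nonneg
      have h6 : (0:ℝ) ≤ infDist y (T i) := infDist_nonneg
      have h7 : ‖x‖ * infDist y (T i) ≤ infDist x (Λ i) + M := by rw [← h4]; exact h1
      have h8 := mul_le_mul h7 h7 (by positivity) (by positivity)
      nlinarith [sq_nonneg (infDist x (Λ i) - M)]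
    have hsum_lhs : HasSum (fun i => g i * (‖x‖^2/2 * (infDist y (T i))^2 - M^2))
        (‖x‖^2/2 * G y - M^2) := by
      have h1 : HasSum (fun i => ‖x‖^2/2 * (g i * (infDist y (T i))^2)) (‖x‖^2/2 * G y) :=
        (hsummT y).hasSum.mul_left _
      have h2 : HasSum (fun i => g i * M^2) (1 * M^2) := hgHasSum.mul_right _
      have h3 := h1.sub h2
      rw [one_mul] at h3
      have he : (fun i => ‖x‖^2/2 * (g i * (infDist y (T i))^2) - g i * M^2)
          = fun i => g i * (‖x‖^2/2 * (infDist y (T i))^2 - M^2) := by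
        funext i; ring
      rwa [he] at h3
    have h9 : ‖x‖^2/2 * G y - M^2 ≤ ψ x := hasSum_le hpt hsum_lhs (hsummΛ x).hasSum
    have h10 := mul_le_mul_of_nonneg_left hcy (by positivity : (0:ℝ) ≤ ‖x‖^2/2)
    nlinarith
  have hψ0 : ψ 0 ≤ M^2 := by
    have h1 : ∀ i, g i * (infDist (0:EuclideanSpace ℝ (Fin n)) (Λ i))^2 ≤ g i * M^2 := by
      intro i
      refine mul_le_mul_of_nonneg_left ?_ (hgpos i).le
      have h2 := hdistΛ_le i 0
      rw [norm_zero, zero_add] at h2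
      have h3 : (0:ℝ) ≤ infDist (0:EuclideanSpace ℝ (Fin n)) (Λ i) := infDist_nonneg
      nlinarith
    have h2 : HasSum (fun i => g i * M^2) (1 * M^2) := hgHasSum.mul_right _
    rw [one_mul] at h2
    exact hasSum_le h1 (hsummΛ 0).hasSum h2
  -- global minimizer of ψ
  obtain ⟨R, hR1, hRsq⟩ : ∃ R : ℝ, 1 ≤ R ∧ 4*M^2/c + 4/c ≤ R^2 := by
    have harg : (0:ℝ) ≤ 4*M^2/c + 4/c :=
      add_nonneg (div_nonneg (by positivity) hcpos.le) (div_nonneg (by norm_num) hcpos.le)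
    have h1 := Real.sq_sqrt harg
    have h2 := Real.sqrt_nonneg (4*M^2/c + 4/c)
    exact ⟨Real.sqrt (4*M^2/c + 4/c) + 1, by linarith, by nlinarith⟩
  have houter : ∀ x : EuclideanSpace ℝ (Fin n), R < ‖x‖ → ψ 0 < ψ x := by
    intro x hx
    have hx0 : x ≠ 0 := by
      intro h
      rw [h, norm_zero] at hx
      linarith
    have h1 := hcoer x hx0
    have hRpos : (0:ℝ) < R := by linarith
    have h2 : R^2 < ‖x‖^2 := by nlinarith
    have hch : c * (4*M^2/c + 4/c) = 4*M^2 + 4 := by field_simp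
    have h3 : M^2 + 2 ≤ c * R^2 / 2 := by nlinarith [mul_le_mul_of_nonneg_left hRsq hcpos.le]
    nlinarith [hψ0]
  obtain ⟨xm, hxmB, hxmmin⟩ :=
    (isCompact_closedBall (0:EuclideanSpace ℝ (Fin n)) R).exists_isMinOn
      ⟨0, mem_closedBall_self (by linarith)⟩ (hψcont R)
  have hglobal : ∀ u, ψ xm ≤ ψ u := by
    intro u
    by_cases hu : u ∈ closedBall (0:EuclideanSpace ℝ (Fin n)) R
    · exact isMinOn_iff.1 hxmmin u hu
    · have hgt : R < ‖u‖ := by rwa [mem_closedBall, dist_zero_right, not_le] at hu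
      have h1 := houter u hgt
      have h2 : ψ xm ≤ ψ 0 := isMinOn_iff.1 hxmmin 0 (mem_closedBall_self (by linarith))
      linarith
  -- nearest points and normal directions
  have hproj : ∀ i, ∃ w ∈ Λ i, infDist xm (Λ i) = dist xm w :=
    fun i => (hΛclosed i).exists_infDist_eq_dist (hΛne i) xm
  choose w hwΛ hwd using hproj
  set b : ℕ → EuclideanSpace ℝ (Fin n) := fun i => xm - w i with hbdef
  have hbnorm : ∀ i, ‖b i‖ = infDist xm (Λ i) := by
    intro i
    rw [hbdef]
    simp only []
    rw [← dist_eq_norm, ← hwd i]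
  have hwmin : ∀ i, ∀ u ∈ Λ i, dist xm (w i) ≤ dist xm u := by
    intro i u hu
    rw [← hwd i]
    exact infDist_le_dist_of_mem hu
  have hbB : ∀ i, ‖b i‖ ≤ ‖xm‖ + M := fun i => by rw [hbnorm i]; exact hdistΛ_le i xm
  have hψm_sum : HasSum (fun i => g i * ‖b i‖^2) (ψ xm) := by
    have he : (fun i => g i * (infDist xm (Λ i))^2) = fun i => g i * ‖b i‖^2 := by
      funext i; rw [hbnorm i]
    have hψeq : ψ xm = ∑' i, g i * (infDist xm (Λ i))^2 := rfl
    rw [hψeq, ← he]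
    exact (hsummΛ xm).hasSum
  have hsnn : 0 ≤ ψ xm := tsum_nonneg (fun i => by positivity)
  have hspos : 0 < ψ xm := by
    rcases hsnn.eq_or_lt with h0 | h0
    · exfalso
      have hxmΛ : ∀ i, xm ∈ Λ i := by
        intro i
        have h1 := Summable.le_tsum (hsummΛ xm) i (fun j _ => by positivity)
        have h2 : (0:ℝ) ≤ g i * (infDist xm (Λ i))^2 := by positivity
        have h3 : g i * (infDist xm (Λ i))^2 = 0 := le_antisymm (by rw [hψdef] at h0; linarith) h2
        have h4 : infDist xm (Λ i) = 0 := by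
          rcases mul_eq_zero.1 h3 with h | h
          · exact absurd h (hgpos i).ne'
          · exact pow_eq_zero_iff (by norm_num) |>.1 h
        exact ((hΛclosed i).mem_iff_infDist_zero (hΛne i)).2 h4
      have hmem : xm ∈ ⋂ i, Λ i := mem_iInter.2 hxmΛ
      rw [htextΛ] at hmem
      exact hmem
    · exact h0
  -- the stationarity condition : ∑ gᵢ bᵢ = 0
  have hVsumm : Summable (fun i => g i • b i) := by
    refine Summable.of_norm_bounded (g := fun i => g i * (‖xm‖ + M)) (hg.mul_right _) (fun i => ?_)
    rw [norm_smul, Real.norm_eq_abs, abs_of_pos (hgpos i)]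
    exact mul_le_mul_of_nonneg_left (hbB i) (hgpos i).le
  set V := ∑' i, g i • b i with hVdef
  have hVhs : HasSum (fun i => g i • b i) V := hVsumm.hasSum
  have hvar : ∀ h : EuclideanSpace ℝ (Fin n), 0 ≤ 2 * (inner ℝ V h : ℝ) + ‖h‖^2 := by
    intro h
    have hH2 : HasSum (fun i => g i * (2 * (inner ℝ (b i) h : ℝ))) (2 * (inner ℝ V h : ℝ)) := by
      have hL := (innerSL ℝ h).hasSum hVhs
      have he : (fun i => (innerSL ℝ h) (g i • b i)) = fun i => g i * (inner ℝ (b i) h : ℝ) := by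
        funext i
        have h0 : (innerSL ℝ h) (g i • b i) = (inner ℝ h (g i • b i) : ℝ) := rfl
        rw [h0, real_inner_smul_right, real_inner_comm]
      rw [he] at hL
      have he2 : (innerSL ℝ h) V = (inner ℝ V h : ℝ) := by
        have h0 : (innerSL ℝ h) V = (inner ℝ h V : ℝ) := rfl
        rw [h0, real_inner_comm]
      rw [he2] at hL
      have := hL.mul_left 2
      have he3 : (fun i => 2 * (g i * (inner ℝ (b i) h : ℝ)))
          = fun i => g i * (2 * (inner ℝ (b i) h : ℝ)) := by
        funext i; ring
      rwa [he3] at this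
    have hub : ψ (xm + h) ≤ ψ xm + (2 * (inner ℝ V h : ℝ) + ‖h‖^2) := by
      have hpt : ∀ i, g i * (infDist (xm + h) (Λ i))^2 ≤
          g i * ‖b i‖^2 + (g i * (2 * (inner ℝ (b i) h : ℝ)) + g i * ‖h‖^2) := by
        intro i
        have h1 : infDist (xm + h) (Λ i) ≤ ‖b i + h‖ := by
          have h2 : infDist (xm + h) (Λ i) ≤ dist (xm + h) (w i) :=
            infDist_le_dist_of_mem (hwΛ i)
          rw [dist_eq_norm] at h2
          have he : xm + h - w i = b i + h := by rw [hbdef]; abel_nf; abel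
          rwa [he] at h2
        have h3 : (infDist (xm+h) (Λ i))^2 ≤ ‖b i + h‖^2 := by
          have := infDist_nonneg (s := Λ i) (x := xm + h)
          nlinarith
        have h4 : ‖b i + h‖^2 = ‖b i‖^2 + 2*(inner ℝ (b i) h : ℝ) + ‖h‖^2 := norm_add_sq_real _ _
        have h5 := mul_le_mul_of_nonneg_left h3 (hgpos i).le
        rw [h4] at h5
        nlinarith
      have h5 : HasSum (fun i => g i * ‖h‖^2) (1 * ‖h‖^2) := hgHasSum.mul_right _
      rw [one_mul] at h5
      have hs2 := hψm_sum.add (hH2.add h5)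
      exact hasSum_le hpt (hsummΛ (xm+h)).hasSum hs2
    have hlb := hglobal (xm + h)
    linarith
  have hV0 : V = 0 := by
    by_contra hV
    have h := hvar (-V)
    rw [inner_neg_right, norm_neg] at h
    have hin : (inner ℝ V V : ℝ) = ‖V‖^2 := real_inner_self_eq_norm_sq V
    have hVn : 0 < ‖V‖ := norm_pos_iff.2 hV
    nlinarith
  -- final normalization
  obtain ⟨σ, hσpos, hσsq⟩ : ∃ σ : ℝ, 0 < σ ∧ σ^2 = ψ xm :=
    ⟨Real.sqrt (ψ xm), Real.sqrt_pos.2 hspos, Real.sq_sqrt hsnn⟩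
  refine ⟨fun i => σ⁻¹ • b i, fun i => ?_, ?_, ?_⟩
  · have hwT : w i + a i ∈ T i := by
      obtain ⟨x, hx, hxe⟩ := hwΛ i
      have hxe' : x - a i = w i := hxe
      have hxx : w i + a i = x := by rw [← hxe']; exact sub_add_cancel x (a i)
      rwa [hxx]
    have hbfn : b i ∈ fnormal (Λ i) (w i) := prox_mem_fnormal (hwmin i)
    have hbfn' : b i ∈ fnormal (T i) (w i + a i) := fnormal_translate hbfn
    have hxsfn : σ⁻¹ • b i ∈ fnormal (T i) (w i + a i) := fnormal_smul hbfn' (by positivity)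
    exact ⟨fnormal_point_mem_lnormal_zero hwT (hTcone i) hxsfn,
      fnormal_tcone_mem_lnormal (hcl i) (hxb i) hwT hxsfn⟩
  · have h1 : HasSum (fun i => g i • (σ⁻¹ • b i)) (0 : EuclideanSpace ℝ (Fin n)) := by
      have h2 : HasSum (fun i => g i • b i) (0 : EuclideanSpace ℝ (Fin n)) := hV0 ▸ hVhs
      have h3 := h2.const_smul σ⁻¹
      rw [smul_zero] at h3
      have he : (fun i => σ⁻¹ • (g i • b i)) = fun i => g i • (σ⁻¹ • b i) := by
        funext i; rw [smul_comm]
      rwa [he] at h3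
    rw [hgdef] at h1
    exact h1.tendsto_sum_nat
  · have h1 : HasSum (fun i => g i * ‖σ⁻¹ • b i‖^2) 1 := by
      have h2 := hψm_sum.mul_left (ψ xm)⁻¹
      rw [inv_mul_cancel₀ (ne_of_gt hspos)] at h2
      have he : (fun i => (ψ xm)⁻¹ * (g i * ‖b i‖^2)) = fun i => g i * ‖σ⁻¹ • b i‖^2 := by
        funext i
        rw [norm_smul, Real.norm_eq_abs, abs_of_pos (by positivity : (0:ℝ) < σ⁻¹),
          mul_pow, inv_pow, hσsq]
        ring
      rwa [he] at h2
    rw [hgdef] at h1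
    exact h1.tendsto_sum_nat
end

section
/- Let {Ω_i}_{i∈ℕ} be a countable system of convex sets in ℝⁿ and let x̄ ∈ ∩_{i=1}^∞ Ω_i. Then the following are equivalent: (a) the system has the CHIP at x̄, i.e., T(x̄; ∩_{i=1}^∞ Ω_i) = ∩_{i=1}^∞ T(x̄;Ω_i); (b) the system has the asymptotic strong CHIP at x̄, i.e., N(x̄; ∩_{i=1}^∞ Ω_i) = cl co ∪_{i=1}^∞ N(x̄;Ω_i). In particular, the strong CHIP, namely N(x̄; ∩_{i=1}^∞ Ω_i) = {Σ_{i∈I} x*_i | x*_i ∈ N(x̄;Ω_i), I a finite subset of ℕ}, implies the CHIP. -/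
open Filter Topology Set Metric
open Pointwise

section Aux
open RealInnerProductSpace
variable {H : Type*} [NormedAddCommGroup H] [InnerProductSpace ℝ H]

/-- Negative polar cone of a set. -/
def pol (S : Set H) : Set H := {v : H | ∀ u ∈ S, ⟪u, v⟫ ≤ 0}

lemma pol_mono {S T : Set H} (h : S ⊆ T) : pol T ⊆ pol S :=
  fun _ hv u hu => hv u (h hu)

lemma pol_closure (S : Set H) : pol (closure S) = pol S := by
  refine Set.Subset.antisymm (pol_mono subset_closure) (fun v hv u hu => ?_)
  have hcl : closure S ⊆ {u : H | ⟪u, v⟫ ≤ 0} :=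
    closure_minimal hv (isClosed_le (continuous_id.inner continuous_const) continuous_const)
  exact hcl hu

lemma pol_convexHull (S : Set H) : pol (convexHull ℝ S) = pol S := by
  refine Set.Subset.antisymm (pol_mono (subset_convexHull ℝ S)) (fun v hv u hu => ?_)
  have hlin : IsLinearMap ℝ (fun u : H => ⟪u, v⟫) :=
    ⟨fun a b => inner_add_left a b v, fun c a => real_inner_smul_left a v c⟩
  have hcl : convexHull ℝ S ⊆ {u : H | ⟪u, v⟫ ≤ 0} :=
    convexHull_min hv (convex_halfSpace_le hlin 0)
  exact hcl hu

lemma pol_iUnion {ι : Sort*} (S : ι → Set H) : pol (⋃ i, S i) = ⋂ i, pol (S i) := by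
  ext v
  simp only [pol, Set.mem_iInter, Set.mem_setOf_eq, Set.mem_iUnion]
  exact ⟨fun h i u hu => h u ⟨i, hu⟩, fun h u ⟨i, hu⟩ => h i u hu⟩

lemma isClosed_pol (S : Set H) : IsClosed (pol S) := by
  have h : pol S = ⋂ u ∈ S, {v : H | ⟪u, v⟫ ≤ 0} := by
    ext v; simp [pol]
  rw [h]
  exact isClosed_biInter fun u _ =>
    isClosed_le (continuous_const.inner continuous_id) continuous_const

lemma convex_pol (S : Set H) : Convex ℝ (pol S) := by
  intro a ha b hb s t hs ht _ u hu
  rw [inner_add_right, real_inner_smul_right, real_inner_smul_right]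
  have h1 := mul_nonpos_of_nonneg_of_nonpos hs (ha u hu)
  have h2 := mul_nonpos_of_nonneg_of_nonpos ht (hb u hu)
  linarith

lemma cnormal_eq_pol_image (Ω : Set H) (x : H) :
    cnormal Ω x = pol ((fun y => y - x) '' Ω) := by
  ext v
  constructor
  · rintro hv u ⟨y, hy, rfl⟩
    rw [real_inner_comm]
    exact hv y hy
  · intro hv y hy
    rw [real_inner_comm]
    exact hv (y - x) ⟨y, hy, rfl⟩

/-- The bipolar theorem for nonempty closed convex cones. -/
lemma bipolar [CompleteSpace H] (K : ConvexCone ℝ H) (hne : (K : Set H).Nonempty)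
    (hc : IsClosed (K : Set H)) : pol (pol (K : Set H)) = (K : Set H) := by
  ext w
  constructor
  · intro hw
    by_contra hwK
    obtain ⟨f, u, hfK, hfw⟩ := geometric_hahn_banach_closed_point K.convex hc hwK
    have hsm : ∀ a ∈ (K : Set H), ∀ t : ℝ, 0 < t → t * f a < u := by
      intro a ha t ht
      have := hfK _ (K.smul_mem ht ha)
      rwa [map_smul, smul_eq_mul] at this
    have hfa : ∀ a ∈ (K : Set H), f a ≤ 0 := by
      intro a ha
      by_contra hpos
      push_neg at hpos
      have := hsm a ha ((|u| + 1) / f a) (div_pos (by positivity) hpos)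
      rw [div_mul_cancel₀ _ hpos.ne'] at this
      linarith [le_abs_self u]
    have hu : 0 ≤ u := by
      obtain ⟨a, ha⟩ := hne
      by_contra hneg
      push_neg at hneg
      have h1 := hsm a ha 1 one_pos
      have hfa' : f a < 0 := by linarith
      have hpos : 0 < u / f a / 2 := by
        have := div_pos_of_neg_of_neg hneg hfa'
        positivity
      have := hsm a ha (u / f a / 2) hpos
      have hne0 : f a ≠ 0 := hfa'.ne
      have e : u / f a / 2 * f a = u / 2 := by field_simp
      rw [e] at this
      linarith
    have hy : (InnerProductSpace.toDual ℝ H).symm f ∈ pol (K : Set H) := by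
      intro a ha
      rw [real_inner_comm, InnerProductSpace.toDual_symm_apply]
      exact hfa a ha
    have := hw _ hy
    have h2 : ⟪(InnerProductSpace.toDual ℝ H).symm f, w⟫ = f w :=
      InnerProductSpace.toDual_symm_apply
    linarith
  · intro hw v hv
    rw [real_inner_comm]
    exact hv w hw

/-- The generating set of the tangent cone of a convex set. -/
def Dset (Ω : Set H) (x : H) : Set H := {v : H | ∃ t : ℝ, 0 ≤ t ∧ ∃ y ∈ Ω, v = t • (y - x)}

lemma tcone_eq_closure_Dset {Ω : Set H} {x : H} (hconv : Convex ℝ Ω) (hx : x ∈ Ω) :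
    tcone Ω x = closure (Dset Ω x) := by
  apply Set.Subset.antisymm
  · rintro v ⟨t, w, htpos, _, hwlim, hmem⟩
    refine mem_closure_of_tendsto hwlim (Filter.Eventually.of_forall fun k => ?_)
    refine ⟨(t k)⁻¹, (inv_pos.2 (htpos k)).le, x + t k • w k, hmem k, ?_⟩
    rw [add_sub_cancel_left, smul_smul, inv_mul_cancel₀ (htpos k).ne', one_smul]
  · intro v hv
    obtain ⟨vk, hvk, hvlim⟩ := mem_closure_iff_seq_limit.1 hv
    choose tk htk yk hyk hvkeq using hvk
    refine ⟨fun k => ((k + 1 : ℝ) * max (tk k) 1)⁻¹, vk, ?_, ?_, hvlim, ?_⟩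
    · intro k
      positivity
    · apply squeeze_zero (fun k => by positivity) (g := fun k : ℕ => 1 / (k + 1 : ℝ))
      · intro k
        rw [one_div]
        apply inv_anti₀ (by positivity)
        calc (k + 1 : ℝ) = (k + 1 : ℝ) * 1 := by ring
        _ ≤ (k + 1 : ℝ) * max (tk k) 1 := by
            apply mul_le_mul_of_nonneg_left (le_max_right _ _) (by positivity)
      · exact tendsto_one_div_add_atTop_nhds_zero_nat
    · intro k
      set c : ℝ := ((k + 1 : ℝ) * max (tk k) 1)⁻¹ * tk k with hc
      have hc0 : 0 ≤ c := mul_nonneg (by positivity) (htk k)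
      have hc1 : c ≤ 1 := by
        rw [hc, inv_mul_eq_div, div_le_one (by positivity)]
        calc tk k ≤ max (tk k) 1 := le_max_left _ _
        _ = 1 * max (tk k) 1 := (one_mul _).symm
        _ ≤ (k + 1 : ℝ) * max (tk k) 1 := by
            apply mul_le_mul_of_nonneg_right _ (by positivity)
            have : (0:ℝ) ≤ (k:ℝ) := Nat.cast_nonneg k
            linarith
      have key : x + (((k + 1 : ℝ) * max (tk k) 1)⁻¹ : ℝ) • vk k
          = (1 - c) • x + c • yk k := by
        rw [hvkeq k, smul_smul, ← hc, smul_sub, sub_smul, one_smul]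
        abel
      rw [key]
      exact hconv hx (hyk k) (by linarith) hc0 (by abel)

/-- `Dset` is a convex cone. -/
def Dcone {Ω : Set H} {x : H} (hconv : Convex ℝ Ω) (hx : x ∈ Ω) : ConvexCone ℝ H where
  carrier := Dset Ω x
  smul_mem' := by
    rintro c hc v ⟨t, ht, y, hy, rfl⟩
    exact ⟨c * t, mul_nonneg hc.le ht, y, hy, smul_smul c t _⟩
  add_mem' := by
    rintro v ⟨t₁, ht₁, y₁, hy₁, rfl⟩ w ⟨t₂, ht₂, y₂, hy₂, rfl⟩
    rcases eq_or_lt_of_le (add_nonneg ht₁ ht₂) with hs | hs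
    · have h1 : t₁ = 0 := by linarith [ht₁, ht₂, hs]
      have h2 : t₂ = 0 := by linarith
      refine ⟨0, le_refl 0, x, hx, ?_⟩
      rw [h1, h2, zero_smul, zero_smul, zero_smul, add_zero]
    · refine ⟨t₁ + t₂, hs.le, (t₁ / (t₁ + t₂)) • y₁ + (t₂ / (t₁ + t₂)) • y₂,
        hconv hy₁ hy₂ (div_nonneg ht₁ hs.le) (div_nonneg ht₂ hs.le)
          (by rw [← add_div, div_self hs.ne']), ?_⟩
      have hne' : t₁ + t₂ ≠ 0 := hs.ne'
      match_scalars <;> field_simp <;> ring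

lemma coe_Dcone {Ω : Set H} {x : H} (hconv : Convex ℝ Ω) (hx : x ∈ Ω) :
    ((Dcone hconv hx : ConvexCone ℝ H) : Set H) = Dset Ω x := rfl

lemma pol_Dset {Ω : Set H} {x : H} (hx : x ∈ Ω) : pol (Dset Ω x) = cnormal Ω x := by
  ext v
  constructor
  · intro hv y hy
    have := hv (y - x) ⟨1, zero_le_one, y, hy, (one_smul ℝ _).symm⟩
    rwa [real_inner_comm] at this
  · rintro hv u ⟨t, ht, y, hy, rfl⟩
    rw [real_inner_smul_left, real_inner_comm]
    exact mul_nonpos_of_nonneg_of_nonpos ht (hv y hy)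

lemma cnormal_eq_pol_tcone {Ω : Set H} {x : H} (hconv : Convex ℝ Ω) (hx : x ∈ Ω) :
    cnormal Ω x = pol (tcone Ω x) := by
  rw [tcone_eq_closure_Dset hconv hx, pol_closure, pol_Dset hx]

lemma tcone_eq_pol_cnormal [CompleteSpace H] {Ω : Set H} {x : H}
    (hconv : Convex ℝ Ω) (hx : x ∈ Ω) : tcone Ω x = pol (cnormal Ω x) := by
  have hne : ((Dcone hconv hx).closure : Set H).Nonempty :=
    ⟨0, subset_closure ⟨0, le_refl 0, x, hx, (zero_smul ℝ _).symm⟩⟩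
  have hb := bipolar (Dcone hconv hx).closure hne isClosed_closure
  have hcoe : ((Dcone hconv hx).closure : Set H) = closure (Dset Ω x) := rfl
  rw [hcoe, pol_closure, pol_Dset hx] at hb
  rw [tcone_eq_closure_Dset hconv hx]
  exact hb.symm

end Aux

/-- **Characterization of CHIP for countable intersections of convex sets** (Theorem 3.2).
For convex sets, the CHIP is equivalent to the asymptotic strong CHIP; in particular
the strong CHIP implies the CHIP. -/
theorem CHIP_characterization_convex {n : ℕ}
    (Ω : ℕ → Set (EuclideanSpace ℝ (Fin n)))
    (hconv : ∀ i, Convex ℝ (Ω i))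
    (xb : EuclideanSpace ℝ (Fin n)) (hxb : ∀ i, xb ∈ Ω i) :
    ((tcone (⋂ i, Ω i) xb = ⋂ i, tcone (Ω i) xb) ↔
      (cnormal (⋂ i, Ω i) xb = closure (convexHull ℝ (⋃ i, cnormal (Ω i) xb)))) ∧
    ((cnormal (⋂ i, Ω i) xb = finSums fun i => cnormal (Ω i) xb) →
      tcone (⋂ i, Ω i) xb = ⋂ i, tcone (Ω i) xb) := by
  have hconvI : Convex ℝ (⋂ i, Ω i) := convex_iInter hconv
  have hxI : xb ∈ ⋂ i, Ω i := Set.mem_iInter.2 hxb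
  have hT : ∀ i, tcone (Ω i) xb = pol (cnormal (Ω i) xb) :=
    fun i => tcone_eq_pol_cnormal (hconv i) (hxb i)
  set U : Set (EuclideanSpace ℝ (Fin n)) := ⋃ i, cnormal (Ω i) xb with hU
  set M := closure (convexHull ℝ U) with hM
  have hpolM : pol M = ⋂ i, tcone (Ω i) xb := by
    rw [hM, pol_closure, pol_convexHull, hU, pol_iUnion]
    exact Set.iInter_congr fun i => (hT i).symm
  have hNsmul : ∀ (c : ℝ), 0 ≤ c → ∀ v ∈ U, c • v ∈ U := by
    intro c hc v hv
    rw [hU, Set.mem_iUnion] at hv ⊢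
    obtain ⟨i, hi⟩ := hv
    refine ⟨i, fun y hy => ?_⟩
    rw [real_inner_smul_left]
    exact mul_nonpos_of_nonneg_of_nonpos hc (hi y hy)
  have hSsmul : ∀ (c : ℝ), 0 < c → ∀ w ∈ convexHull ℝ U, c • w ∈ convexHull ℝ U := by
    intro c hc w hw
    have h1 : c • w ∈ c • convexHull ℝ U := Set.smul_mem_smul_set hw
    rw [← convexHull_smul] at h1
    refine convexHull_mono ?_ h1
    rintro _ ⟨v, hv, rfl⟩
    exact hNsmul c hc.le v hv
  let K : ConvexCone ℝ (EuclideanSpace ℝ (Fin n)) :=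
    { carrier := convexHull ℝ U
      smul_mem' := by intro c hc w hw; exact hSsmul c hc w hw
      add_mem' := by
        intro u hu v hv
        have hmid : (1/2 : ℝ) • u + (1/2 : ℝ) • v ∈ convexHull ℝ U :=
          (convex_convexHull ℝ U) hu hv (by norm_num) (by norm_num) (by norm_num)
        have h2 := hSsmul 2 two_pos _ hmid
        have he : (2:ℝ) • ((1/2 : ℝ) • u + (1/2 : ℝ) • v) = u + v := by
          rw [smul_add, smul_smul, smul_smul]; norm_num
        rwa [he] at h2 }
  have h0U : (0 : EuclideanSpace ℝ (Fin n)) ∈ U :=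
    Set.mem_iUnion.2 ⟨0, fun y _ => by simp⟩
  have hbM : pol (pol M) = M := by
    have hb := bipolar K.closure ⟨0, subset_closure (subset_convexHull ℝ U h0U)⟩ isClosed_closure
    exact hb
  have hNI_pol : cnormal (⋂ i, Ω i) xb = pol (tcone (⋂ i, Ω i) xb) :=
    cnormal_eq_pol_tcone hconvI hxI
  have hTI : tcone (⋂ i, Ω i) xb = pol (cnormal (⋂ i, Ω i) xb) :=
    tcone_eq_pol_cnormal hconvI hxI
  have main : (tcone (⋂ i, Ω i) xb = ⋂ i, tcone (Ω i) xb) ↔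
      (cnormal (⋂ i, Ω i) xb = M) := by
    constructor
    · intro ha
      rw [hNI_pol, ha, ← hpolM, hbM]
    · intro hb
      rw [hTI, hb, hpolM]
  refine ⟨main, fun hs => main.2 ?_⟩
  apply Set.Subset.antisymm
  · rw [hs]
    rintro v ⟨I, xs, hxs, rfl⟩
    apply subset_closure
    rcases I.eq_empty_or_nonempty with rfl | hI
    · simpa using subset_convexHull ℝ U h0U
    · have hcard : (0:ℝ) < (I.card : ℝ) := by exact_mod_cast Finset.card_pos.2 hI
      have hsum := (convex_convexHull ℝ U).sum_mem (t := I)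
        (w := fun _ => (I.card : ℝ)⁻¹) (z := fun i => (I.card : ℝ) • xs i)
        (fun i _ => inv_nonneg.2 hcard.le)
        (by rw [Finset.sum_const, nsmul_eq_mul]; exact mul_inv_cancel₀ hcard.ne')
        (fun i hi => subset_convexHull ℝ U (hNsmul _ hcard.le _ (Set.mem_iUnion.2 ⟨i, hxs i hi⟩)))
      have heq : ∑ i ∈ I, xs i = ∑ i ∈ I, ((I.card : ℝ)⁻¹) • ((I.card : ℝ) • xs i) := by
        refine Finset.sum_congr rfl fun i _ => ?_
        rw [smul_smul, inv_mul_cancel₀ hcard.ne', one_smul]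
      rw [heq]
      exact hsum
  · have hUsub : U ⊆ cnormal (⋂ i, Ω i) xb := by
      rw [hU]
      exact Set.iUnion_subset fun i v hv y hy => hv y (Set.mem_iInter.1 hy i)
    rw [cnormal_eq_pol_image]
    exact closure_minimal
      (convexHull_min (by rw [cnormal_eq_pol_image] at hUsub; exact hUsub) (convex_pol _))
      (isClosed_pol _)
end

section
/- Let {Ω_i}_{i∈ℕ} be a countable system of closed sets in ℝⁿ with Ω := ∩_{i=1}^∞ Ω_i and x̄ ∈ Ω. Assume the family of distance functions {d_{Ω_i}}_{i∈ℕ} is equi-directionally differentiable at x̄ and that there exist C > 0, an index j ∈ ℕ, and a neighborhood U of x̄ such that dist(x;Ω) ≤ C sup_{i≠j} dist(x;Ω_i) for all x ∈ Ω_j ∩ U. Then the system {Ω_i}_{i∈ℕ} satisfies the CHIP at x̄, i.e., T(x̄; ∩_{i=1}^∞ Ω_i) = ∩_{i=1}^∞ T(x̄;Ω_i). -/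
open Filter Topology Set Metric

/-- **CHIP via simplified linear regularity** (Corollary 3.6). -/
theorem CHIP_from_simplified_linear_regularity {n : ℕ}
    (Ω : ℕ → Set (EuclideanSpace ℝ (Fin n))) (xb : EuclideanSpace ℝ (Fin n))
    (hcl : ∀ i, IsClosed (Ω i)) (hxb : ∀ i, xb ∈ Ω i)
    (hequi : ∀ h : EuclideanSpace ℝ (Fin n), ∃ d : ℕ → ℝ, ∀ ε > 0, ∃ δ > 0,
      ∀ t : ℝ, 0 < t → t < δ → ∀ i, |infDist (xb + t • h) (Ω i) / t - d i| ≤ ε)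
    (C : ℝ) (hC : 0 < C) (j : ℕ) (U : Set (EuclideanSpace ℝ (Fin n))) (hU : U ∈ nhds xb)
    (hreg : ∀ x ∈ Ω j ∩ U,
      infDist x (⋂ i, Ω i) ≤ C * ⨆ i : {k : ℕ // k ≠ j}, infDist x (Ω i)) :
    tcone (⋂ i, Ω i) xb = ⋂ i, tcone (Ω i) xb := by
  have hΩcl : IsClosed (⋂ i, Ω i) := isClosed_iInter hcl
  have hΩne : (⋂ i, Ω i).Nonempty := ⟨xb, Set.mem_iInter.2 hxb⟩
  apply Set.Subset.antisymm
  · intro v hv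
    obtain ⟨t, w, ht, ht0, hw, hmem⟩ := hv
    exact Set.mem_iInter.2 fun i => ⟨t, w, ht, ht0, hw, fun k =>
      Set.mem_iInter.1 (hmem k) i⟩
  · intro h hh
    rw [Set.mem_iInter] at hh
    obtain ⟨d, hd⟩ := hequi h
    -- each directional derivative is zero
    have hd0 : ∀ i, d i = 0 := by
      intro i
      have habs : ∀ ε > (0:ℝ), |d i| ≤ 2 * ε := by
        intro ε hε
        obtain ⟨t, w, htpos, ht0, hw, hmem⟩ := hh i
        obtain ⟨δ, hδ, H⟩ := hd ε hε
        have h1 : ∀ᶠ k in atTop, t k < δ := ht0.eventually (gt_mem_nhds hδ)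
        have h2 : ∀ᶠ k in atTop, dist (w k) h < ε :=
          hw.eventually (Metric.ball_mem_nhds h hε)
        obtain ⟨k, hk1, hk2⟩ := (h1.and h2).exists
        have hinf : infDist (xb + t k • h) (Ω i) ≤ t k * ε := by
          calc infDist (xb + t k • h) (Ω i) ≤ dist (xb + t k • h) (xb + t k • w k) :=
                infDist_le_dist_of_mem (hmem k)
            _ = ‖t k • h - t k • w k‖ := by
                rw [dist_eq_norm]; congr 1; abel
            _ = |t k| * ‖h - w k‖ := by rw [← smul_sub, norm_smul, Real.norm_eq_abs]
            _ ≤ t k * ε := by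
                rw [abs_of_pos (htpos k)]
                have : ‖h - w k‖ < ε := by
                  rw [← dist_eq_norm, dist_comm]; exact hk2
                exact mul_le_mul_of_nonneg_left this.le (htpos k).le
        have hq0 : 0 ≤ infDist (xb + t k • h) (Ω i) / t k :=
          div_nonneg infDist_nonneg (htpos k).le
        have hqε : infDist (xb + t k • h) (Ω i) / t k ≤ ε := by
          rw [div_le_iff₀ (htpos k)]; linarith [hinf]
        have := H (t k) (htpos k) hk1 i
        rw [abs_sub_comm] at this
        obtain ⟨hl, hr⟩ := abs_le.1 this
        exact abs_le.2 ⟨by linarith, by linarith⟩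
      by_contra hne
      have hpos : 0 < |d i| := abs_pos.2 hne
      have := habs (|d i| / 4) (by linarith)
      linarith
    -- key estimate
    have key : ∀ ε > (0:ℝ), ∃ δ > (0:ℝ), ∀ t : ℝ, 0 < t → t < δ →
        infDist (xb + t • h) (⋂ i, Ω i) ≤ (2 * C + 1) * ε * t := by
      intro ε hε
      obtain ⟨δ₁, hδ₁, H⟩ := hd ε hε
      obtain ⟨r, hr, hrU⟩ := Metric.mem_nhds_iff.1 hU
      refine ⟨min δ₁ (r / (ε + ‖h‖ + 1)), lt_min hδ₁ (by positivity), ?_⟩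
      intro t ht htδ
      have htδ₁ : t < δ₁ := lt_of_lt_of_le htδ (min_le_left _ _)
      have htr : t * (ε + ‖h‖) < r := by
        have h1 : t < r / (ε + ‖h‖ + 1) := lt_of_lt_of_le htδ (min_le_right _ _)
        have h2 : t * (ε + ‖h‖ + 1) < r := by
          rw [← lt_div_iff₀ (by positivity)] ; exact h1
        nlinarith [norm_nonneg h]
      have hest : ∀ i, infDist (xb + t • h) (Ω i) ≤ ε * t := by
        intro i
        have := H t ht htδ₁ i
        rw [hd0 i, sub_zero, abs_of_nonneg (div_nonneg infDist_nonneg ht.le)] at this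
        rw [div_le_iff₀ ht] at this
        linarith
      -- project onto Ω j
      obtain ⟨y, hyΩj, hy⟩ := (hcl j).exists_infDist_eq_dist ⟨xb, hxb j⟩ (xb + t • h)
      have hdy : dist (xb + t • h) y ≤ ε * t := hy ▸ hest j
      have hyU : y ∈ U := by
        apply hrU
        rw [Metric.mem_ball]
        calc dist y xb ≤ dist y (xb + t • h) + dist (xb + t • h) xb := dist_triangle _ _ _
          _ ≤ ε * t + ‖t • h‖ := by
              rw [dist_comm] at hdy
              have heq : dist (xb + t • h) xb = ‖t • h‖ := by
                rw [dist_eq_norm, add_sub_cancel_left]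
              linarith [hdy, heq.le, heq.ge]
          _ = ε * t + t * ‖h‖ := by rw [norm_smul, Real.norm_eq_abs, abs_of_pos ht]
          _ < r := by nlinarith
      have hsup : (⨆ i : {k : ℕ // k ≠ j}, infDist y (Ω i)) ≤ 2 * ε * t := by
        apply Real.iSup_le
        · intro i
          calc infDist y (Ω i) ≤ infDist (xb + t • h) (Ω i) + dist y (xb + t • h) :=
                infDist_le_infDist_add_dist
            _ ≤ ε * t + ε * t := by
                rw [dist_comm]; linarith [hest i.1, hdy]
            _ = 2 * ε * t := by ring
        · positivity
      have hreg' := hreg y ⟨hyΩj, hyU⟩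
      have hCy : infDist y (⋂ i, Ω i) ≤ C * (2 * ε * t) :=
        hreg'.trans (mul_le_mul_of_nonneg_left hsup hC.le)
      calc infDist (xb + t • h) (⋂ i, Ω i)
          ≤ infDist y (⋂ i, Ω i) + dist (xb + t • h) y := infDist_le_infDist_add_dist
        _ ≤ C * (2 * ε * t) + ε * t := by linarith
        _ = (2 * C + 1) * ε * t := by ring
    -- construct sequences
    have key' : ∀ k : ℕ, ∃ t : ℝ, 0 < t ∧ t ≤ 1 / (k + 1) ∧
        infDist (xb + t • h) (⋂ i, Ω i) ≤ (2 * C + 1) * (1 / (k + 1)) * t := by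
      intro k
      have hk1 : (0:ℝ) < 1 / (k + 1) := by positivity
      obtain ⟨δ, hδ, H⟩ := key (1 / (k + 1)) hk1
      refine ⟨min (δ / 2) (1 / (k + 1)), lt_min (by linarith) hk1, min_le_right _ _, ?_⟩
      exact H _ (lt_min (by linarith) hk1) (lt_of_le_of_lt (min_le_left _ _) (by linarith))
    choose t ht1 ht2 ht3 using key'
    have hu : ∀ k : ℕ, ∃ u ∈ (⋂ i, Ω i),
        infDist (xb + t k • h) (⋂ i, Ω i) = dist (xb + t k • h) u := fun k =>
      hΩcl.exists_infDist_eq_dist hΩne _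
    choose u hu1 hu2 using hu
    refine ⟨t, fun k => (t k)⁻¹ • (u k - xb), ht1, ?_, ?_, ?_⟩
    · -- t tendsto 0
      apply squeeze_zero (fun k => (ht1 k).le) ht2
      exact tendsto_one_div_add_atTop_nhds_zero_nat
    · -- w tendsto h
      rw [tendsto_iff_norm_sub_tendsto_zero]
      apply squeeze_zero (fun k => norm_nonneg _)
        (g := fun k : ℕ => (2 * C + 1) * (1 / (k + 1)))
      · intro k
        have htk := ht1 k
        have : (t k)⁻¹ • (u k - xb) - h = (t k)⁻¹ • (u k - (xb + t k • h)) := by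
          rw [smul_sub, smul_sub]
          rw [smul_add, inv_smul_smul₀ htk.ne']
          abel
        rw [this, norm_smul, Real.norm_eq_abs, abs_of_pos (inv_pos.2 htk)]
        have hd3 : ‖u k - (xb + t k • h)‖ ≤ (2 * C + 1) * (1 / (k + 1)) * t k := by
          rw [← dist_eq_norm, dist_comm, ← hu2 k]; exact ht3 k
        calc (t k)⁻¹ * ‖u k - (xb + t k • h)‖
            ≤ (t k)⁻¹ * ((2 * C + 1) * (1 / (k + 1)) * t k) :=
              mul_le_mul_of_nonneg_left hd3 (inv_pos.2 htk).le
          _ = (2 * C + 1) * (1 / (k + 1)) := by field_simp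
      · simpa using tendsto_one_div_add_atTop_nhds_zero_nat.const_mul (2 * C + 1)
    · intro k
      have : xb + t k • ((t k)⁻¹ • (u k - xb)) = u k := by
        rw [smul_inv_smul₀ (ht1 k).ne']
        abel
      rw [this]
      exact hu1 k
end

section
/- Let {Ω_i}_{i∈ℕ} be a countable system of closed sets in ℝⁿ with Ω := ∩_{i=1}^∞ Ω_i and x̄ ∈ Ω. If the tangential rank of the intersection at x̄ is zero, ρ_Ω(x̄) = 0, then the system {Ω_i}_{i∈ℕ} has the CHIP at x̄, i.e., T(x̄; ∩_{i=1}^∞ Ω_i) = ∩_{i=1}^∞ T(x̄;Ω_i). -/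
open Filter Topology Set Metric

/-- **Sufficient condition for CHIP via the tangential rank of the intersection**
(Proposition 3.7).  If `ρ_Ω(x̄) = 0` then the system `{Ωᵢ}` has the CHIP at `x̄`.
The vanishing of the tangential rank
`ρ_Ω(x̄) = inf_i limsup_{x→x̄, x∈Ωᵢ∖{x̄}} dist(x;Ω)/‖x−x̄‖` (with the convention
`ρ_Ω(x̄)=0` when some `Ωᵢ = {x̄}`) is expressed in ε-δ form. -/
theorem CHIP_from_tangential_rank {n : ℕ}
    (Ω : ℕ → Set (EuclideanSpace ℝ (Fin n))) (xb : EuclideanSpace ℝ (Fin n))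
    (hcl : ∀ i, IsClosed (Ω i)) (hxb : ∀ i, xb ∈ Ω i)
    (hrank : ∀ ε > (0 : ℝ), ∃ i, ∃ δ > (0 : ℝ), ∀ x ∈ Ω i, x ≠ xb → ‖x - xb‖ < δ →
      infDist x (⋂ j, Ω j) ≤ ε * ‖x - xb‖) :
    tcone (⋂ i, Ω i) xb = ⋂ i, tcone (Ω i) xb := by
  apply Set.Subset.antisymm
  · intro v hv
    simp only [Set.mem_iInter]
    intro i
    obtain ⟨t, w, ht, htt, hww, hmem⟩ := hv
    exact ⟨t, w, ht, htt, hww, fun k => (Set.mem_iInter.1 (hmem k)) i⟩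
  · intro v hv
    have hΩcl : IsClosed (⋂ j, Ω j) := isClosed_iInter hcl
    have hΩne : (⋂ j, Ω j).Nonempty := ⟨xb, Set.mem_iInter.2 hxb⟩
    have key : ∀ ε > (0:ℝ), ∃ t : ℝ, ∃ w, 0 < t ∧ t < ε ∧ ‖w - v‖ < ε ∧
        xb + t • w ∈ ⋂ j, Ω j := by
      intro ε hε
      set C := ‖v‖ + 1 with hCdef
      have hC : 0 < C := by positivity
      have hη : (0:ℝ) < ε / (2 * C) := by positivity
      obtain ⟨i, δ, hδ, hinf⟩ := hrank (ε / (2 * C)) hη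
      obtain ⟨t, w, ht, htt, hww, hmem⟩ := Set.mem_iInter.1 hv i
      have hnorm : Tendsto (fun k => ‖w k - v‖) atTop (nhds 0) :=
        tendsto_iff_norm_sub_tendsto_zero.1 hww
      have h1 : ∀ᶠ k in atTop, t k < min ε (δ / C) :=
        (tendsto_order.1 htt).2 _ (lt_min hε (by positivity))
      have h2 : ∀ᶠ k in atTop, ‖w k - v‖ < min (ε / 2) 1 :=
        (tendsto_order.1 hnorm).2 _ (lt_min (by positivity) one_pos)
      obtain ⟨k, hk1, hk2⟩ := (h1.and h2).exists
      have htk : 0 < t k := ht k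
      have hwk : ‖w k‖ < C := by
        have h := norm_sub_norm_le (w k) v
        have := lt_of_lt_of_le hk2 (min_le_right _ _)
        simp only [hCdef]; linarith
      have hxnorm : ‖(xb + t k • w k) - xb‖ = t k * ‖w k‖ := by
        rw [add_sub_cancel_left, norm_smul, Real.norm_eq_abs, abs_of_pos htk]
      have hxδ : ‖(xb + t k • w k) - xb‖ < δ := by
        rw [hxnorm]
        calc t k * ‖w k‖ ≤ t k * C := by nlinarith
          _ < (δ / C) * C := by
              have := lt_of_lt_of_le hk1 (min_le_right _ _)
              exact mul_lt_mul_of_pos_right this hC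
          _ = δ := by field_simp
      have hwkv : ‖w k - v‖ < ε / 2 := lt_of_lt_of_le hk2 (min_le_left _ _)
      have htkε : t k < ε := lt_of_lt_of_le hk1 (min_le_left _ _)
      by_cases hx : xb + t k • w k = xb
      · exact ⟨t k, w k, htk, htkε, lt_of_lt_of_le hwkv (by linarith),
          by rw [hx]; exact Set.mem_iInter.2 hxb⟩
      · have hid : infDist (xb + t k • w k) (⋂ j, Ω j) ≤ ε * t k / 2 := by
          calc infDist (xb + t k • w k) (⋂ j, Ω j)
              ≤ (ε / (2 * C)) * ‖(xb + t k • w k) - xb‖ := hinf _ (hmem k) hx hxδ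
            _ = (ε / (2 * C)) * (t k * ‖w k‖) := by rw [hxnorm]
            _ ≤ (ε / (2 * C)) * (t k * C) := by
                exact mul_le_mul_of_nonneg_left (by nlinarith) hη.le
            _ = ε * t k / 2 := by field_simp
        obtain ⟨y, hyΩ, hyd⟩ := hΩcl.exists_infDist_eq_dist hΩne (xb + t k • w k)
        refine ⟨t k, (t k)⁻¹ • (y - xb), htk, htkε, ?_, ?_⟩
        · have hdiff : (t k)⁻¹ • (y - xb) - w k = (t k)⁻¹ • (y - (xb + t k • w k)) := by
            rw [smul_sub, smul_sub, smul_add, smul_smul, inv_mul_cancel₀ htk.ne', one_smul]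
            abel
          have hnw : ‖(t k)⁻¹ • (y - xb) - w k‖ ≤ ε / 2 := by
            rw [hdiff, norm_smul, Real.norm_eq_abs, abs_of_pos (inv_pos.2 htk)]
            have hdy : ‖y - (xb + t k • w k)‖ ≤ ε * t k / 2 := by
              rw [← dist_eq_norm, dist_comm, ← hyd]; exact hid
            calc (t k)⁻¹ * ‖y - (xb + t k • w k)‖ ≤ (t k)⁻¹ * (ε * t k / 2) := by
                  exact mul_le_mul_of_nonneg_left hdy (inv_pos.2 htk).le
              _ = ε / 2 := by field_simp
          calc ‖(t k)⁻¹ • (y - xb) - v‖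
              ≤ ‖(t k)⁻¹ • (y - xb) - w k‖ + ‖w k - v‖ := norm_sub_le_norm_sub_add_norm_sub _ _ _
            _ < ε / 2 + ε / 2 := by linarith
            _ = ε := by ring
        · rw [smul_smul, mul_inv_cancel₀ htk.ne', one_smul, add_sub_cancel]
          exact hyΩ
    choose t w h1 h2 h3 h4 using fun k : ℕ => key (1 / (k + 1)) (by positivity)
    refine ⟨t, w, h1, ?_, ?_, h4⟩
    · exact squeeze_zero (fun k => (h1 k).le) (fun k => (h2 k).le)
        tendsto_one_div_add_atTop_nhds_zero_nat
    · rw [tendsto_iff_norm_sub_tendsto_zero]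
      exact squeeze_zero (fun k => norm_nonneg _) (fun k => (h3 k).le)
        tendsto_one_div_add_atTop_nhds_zero_nat
end

section
/- Let A ⊆ ℝⁿ be a set of invex type, i.e., A = ℝⁿ ∖ ∪_{t∈T} A_t where each A_t is an open convex set, and let x̄ ∈ (∩_{t∈T} bd A_t) ∩ bd A belong to the boundary of A and of each A_t. Then x̄ + T(x̄;A) ⊆ A, where T(x̄;A) is the contingent tangent cone to A at x̄. -/
open Filter Topology Set Metric

/-- **Sets of invex type** (Lemma 3.8).  If `A = ℝⁿ ∖ ⋃_{t∈T} A_t` with each `A_t`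
open and convex, and `x̄` belongs to the boundary of `A` and of every `A_t`, then
`x̄ + T(x̄;A) ⊆ A`. -/
theorem invex_type_tangent_inclusion {n : ℕ} {T : Type*}
    (A : Set (EuclideanSpace ℝ (Fin n))) (At : T → Set (EuclideanSpace ℝ (Fin n)))
    (hopen : ∀ t, IsOpen (At t)) (hconv : ∀ t, Convex ℝ (At t))
    (hA : A = (⋃ t, At t)ᶜ)
    (xb : EuclideanSpace ℝ (Fin n))
    (hbd : ∀ t, xb ∈ frontier (At t)) (hbdA : xb ∈ frontier A) :
    ∀ v ∈ tcone A xb, xb + v ∈ A := by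
  intro v hv
  rw [hA]
  simp only [mem_compl_iff, mem_iUnion, not_exists]
  intro t ht
  obtain ⟨tk, wk, htk, htk0, hwk, hmem⟩ := hv
  have hcl : xb ∈ closure (At t) := (hbd t).1
  -- eventually tk k < 1 and wk k close to v
  have h1 : ∀ᶠ k in atTop, tk k < 1 := htk0.eventually (eventually_lt_nhds one_pos)
  have h2 : ∀ᶠ k in atTop, xb + wk k ∈ At t := by
    have : At t ∈ nhds (xb + v) := (hopen t).mem_nhds ht
    have hc : Tendsto (fun k => xb + wk k) atTop (nhds (xb + v)) :=
      tendsto_const_nhds.add hwk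
    exact hc.eventually this
  obtain ⟨k, hk1, hk2⟩ := (h1.and h2).exists
  have hseg : openSegment ℝ xb (xb + wk k) ⊆ interior (At t) :=
    (hconv t).openSegment_closure_interior_subset_interior hcl
      (by rwa [(hopen t).interior_eq])
  have hpt : xb + tk k • wk k ∈ openSegment ℝ xb (xb + wk k) := by
    refine ⟨1 - tk k, tk k, by linarith [htk k], htk k, by ring, ?_⟩
    simp [smul_add, sub_smul]
    abel
  have := hseg hpt
  rw [interior_eq_iff_isOpen.2 (hopen t)] at this
  have hnot : xb + tk k • wk k ∈ A := hmem k
  rw [hA, mem_compl_iff, mem_iUnion] at hnot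
  exact hnot ⟨t, this⟩
end

section
/- Let {Ω_i}_{i∈ℕ} be a countable system of sets in ℝⁿ and suppose there is a (possibly infinite) index subset J ⊆ ℕ such that each Ω_i for i ∈ J is the complement of an open convex subset of ℝⁿ, and there is a point x̄ with x̄ ∈ (∩_{i∈J} bd Ω_i) ∩ int(∩_{i∉J} Ω_i). Then the system {Ω_i}_{i∈ℕ} has the CHIP at x̄, i.e., T(x̄; ∩_{i=1}^∞ Ω_i) = ∩_{i=1}^∞ T(x̄;Ω_i). -/
open Filter Topology Set Metric

lemma tcone_mono {E : Type*} [NormedAddCommGroup E] [NormedSpace ℝ E]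
    {S T : Set E} (h : S ⊆ T) (x : E) : tcone S x ⊆ tcone T x := by
  rintro v ⟨t, w, h1, h2, h3, h4⟩
  exact ⟨t, w, h1, h2, h3, fun k => h (h4 k)⟩

lemma key_invex {E : Type*} [NormedAddCommGroup E] [NormedSpace ℝ E]
    {U : Set E} (hUo : IsOpen U) (hUc : Convex ℝ U) {x v : E}
    (hx : x ∈ closure U) (hv : v ∈ tcone Uᶜ x) {t : ℝ} (ht : 0 < t) :
    x + t • v ∈ Uᶜ := by
  intro hmem
  obtain ⟨ts, w, hts, htend, hwend, hmemk⟩ := hv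
  obtain ⟨r, hr, hball⟩ := Metric.isOpen_iff.1 hUo _ hmem
  have h1 : ∀ᶠ k in Filter.atTop, ts k < t := htend.eventually (eventually_lt_nhds ht)
  have h2 : ∀ᶠ k in Filter.atTop, w k ∈ Metric.ball v (r / t) :=
    hwend.eventually_mem (Metric.ball_mem_nhds v (by positivity))
  obtain ⟨k, hk1, hk2⟩ := (h1.and h2).exists
  have hwU : x + t • w k ∈ U := by
    apply hball
    rw [Metric.mem_ball, dist_eq_norm]
    have : x + t • w k - (x + t • v) = t • (w k - v) := by
      rw [smul_sub]; abel
    rw [this, norm_smul, Real.norm_of_nonneg ht.le]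
    calc t * ‖w k - v‖ < t * (r / t) := by
          apply mul_lt_mul_of_pos_left _ ht
          simpa [dist_eq_norm] using hk2
      _ = r := by field_simp
  set α : ℝ := ts k / t with hα
  have hαpos : 0 < α := div_pos (hts k) ht
  have hαle : α ≤ 1 := (div_le_one ht).2 hk1.le
  have hrewrite : x + ts k • w k = α • (x + t • w k) + (1 - α) • x := by
    have h : α * t = ts k := div_mul_cancel₀ _ ht.ne'
    rw [smul_add, smul_smul, h, sub_smul, one_smul]; abel
  have : x + ts k • w k ∈ interior U := by
    rw [hrewrite]
    exact hUc.combo_interior_closure_mem_interior (by rw [hUo.interior_eq]; exact hwU) hx hαpos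
      (by linarith) (by ring)
  exact hmemk k (by rw [hUo.interior_eq] at this; exact this)

/-- **CHIP for countable intersections of invex-type sets** (Proposition 3.9). -/
theorem CHIP_invex_type {n : ℕ}
    (Ω : ℕ → Set (EuclideanSpace ℝ (Fin n))) (J : Set ℕ)
    (hinv : ∀ i ∈ J, ∃ U : Set (EuclideanSpace ℝ (Fin n)),
      IsOpen U ∧ Convex ℝ U ∧ Ω i = Uᶜ)
    (xb : EuclideanSpace ℝ (Fin n))
    (hbd : ∀ i ∈ J, xb ∈ frontier (Ω i))
    (hint : xb ∈ interior (⋂ i ∈ Jᶜ, Ω i)) :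
    tcone (⋂ i, Ω i) xb = ⋂ i, tcone (Ω i) xb := by
  apply Set.Subset.antisymm
  · intro v hv
    rw [Set.mem_iInter]
    exact fun i => tcone_mono (Set.iInter_subset _ i) xb hv
  · intro v hv
    simp only [Set.mem_iInter] at hv
    obtain ⟨ε, hε, hball⟩ := Metric.mem_nhds_iff.1 (mem_interior_iff_mem_nhds.1 hint)
    set c : ℝ := ε / (2 * (‖v‖ + 1)) with hc
    have hcpos : 0 < c := by positivity
    have hpos : ∀ k : ℕ, (0:ℝ) < c * (1/2)^k := fun k => by positivity
    refine ⟨fun k => c * (1/2)^k, fun _ => v, hpos, ?_, tendsto_const_nhds, ?_⟩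
    · have := (tendsto_pow_atTop_nhds_zero_of_lt_one (by norm_num : (0:ℝ) ≤ 1/2)
        (by norm_num : (1:ℝ)/2 < 1)).const_mul c
      simpa using this
    · intro k
      rw [Set.mem_iInter]
      intro i
      by_cases hi : i ∈ J
      · obtain ⟨U, hUo, hUc, hUe⟩ := hinv i hi
        have hxcl : xb ∈ closure U := by
          have h := hbd i hi
          rw [hUe, frontier_compl] at h
          exact h.1
        rw [hUe]
        exact key_invex hUo hUc hxcl (hUe ▸ hv i) (hpos k)
      · have hb : xb + (c * (1/2)^k) • v ∈ Metric.ball xb ε := by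
          rw [Metric.mem_ball, dist_eq_norm, add_sub_cancel_left, norm_smul,
            Real.norm_of_nonneg (hpos k).le]
          have h1 : c * (1/2)^k ≤ c := by
            nlinarith [pow_le_one₀ (by norm_num : (0:ℝ) ≤ 1/2) (by norm_num : (1:ℝ)/2 ≤ 1) (n := k)]
          have h2 : c * ‖v‖ < ε := by
            rw [hc]
            rw [div_mul_eq_mul_div, div_lt_iff₀ (by positivity)]
            nlinarith [norm_nonneg v]
          calc c * (1/2)^k * ‖v‖ ≤ c * ‖v‖ := by
                apply mul_le_mul_of_nonneg_right h1 (norm_nonneg v)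
            _ < ε := h2
        have := hball hb
        rw [Set.mem_iInter₂] at this
        exact this i hi
end

section
/- Let {Ω_i}_{i∈ℕ} be a countable system of convex sets in ℝⁿ for which there exists an index i₀ ∈ ℕ with Ω_{i₀} ∩ ∩_{i≠i₀} int Ω_i ≠ ∅. Then the normal qualification condition holds at every x̄ ∈ ∩_{i=1}^∞ Ω_i: whenever x*_i ∈ N(x̄;Ω_i) for all i ∈ ℕ and the series Σ_{i=1}^∞ x*_i converges to 0, then x*_i = 0 for all i ∈ ℕ. -/
open Filter Topology Set Metric

/-- **NQC for countable systems of convex sets** (Proposition 3.11).  If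
`Ω_{i₀} ∩ ⋂_{i≠i₀} int Ωᵢ ≠ ∅`, then the normal qualification condition holds at every
common point: normals `x*ᵢ ∈ N(x̄;Ωᵢ)` whose series converges to `0` must all vanish. -/
theorem NQC_convex_sets {n : ℕ}
    (Ω : ℕ → Set (EuclideanSpace ℝ (Fin n))) (hconv : ∀ i, Convex ℝ (Ω i))
    (i₀ : ℕ) (hne : (Ω i₀ ∩ ⋂ i ∈ {k : ℕ | k ≠ i₀}, interior (Ω i)).Nonempty)
    (xb : EuclideanSpace ℝ (Fin n)) (hxb : ∀ i, xb ∈ Ω i)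
    (xs : ℕ → EuclideanSpace ℝ (Fin n)) (hxs : ∀ i, xs i ∈ cnormal (Ω i) xb)
    (hsum : Tendsto (fun m => ∑ i ∈ Finset.range m, xs i) atTop (nhds 0)) :
    ∀ i, xs i = 0 := by

  obtain ⟨z, hz0, hzint⟩ := hne
  have hzi : ∀ i, i ≠ i₀ → z ∈ interior (Ω i) := by
    intro i hi
    have := Set.mem_iInter₂.1 hzint i hi
    exact this
  have hzΩ : ∀ i, z ∈ Ω i := by
    intro i
    by_cases hi : i = i₀
    · subst hi; exact hz0
    · exact interior_subset (hzi i hi)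
  set a : ℕ → ℝ := fun i => inner ℝ (xs i) (z - xb) with ha_def
  have ha : ∀ i, a i ≤ 0 := fun i => hxs i z (hzΩ i)
  set S : ℕ → ℝ := fun m => ∑ i ∈ Finset.range m, a i with hS_def
  have hSrw : ∀ m, S m = inner ℝ (∑ i ∈ Finset.range m, xs i) (z - xb) := by
    intro m; simp [hS_def, ha_def, sum_inner]
  have hStend : Tendsto S atTop (nhds 0) := by
    have : Tendsto (fun m => (inner ℝ (∑ i ∈ Finset.range m, xs i) (z - xb) : ℝ))
        atTop (nhds (inner ℝ (0 : EuclideanSpace ℝ (Fin n)) (z - xb))) :=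
      (hsum.inner tendsto_const_nhds)
    rw [inner_zero_left] at this
    exact this.congr fun m => (hSrw m).symm
  have hSnonneg : ∀ m, 0 ≤ S m := by
    intro m
    refine le_of_tendsto hStend ?_
    refine eventually_atTop.2 ⟨m, fun k hk => ?_⟩
    have hsub : Finset.range m ⊆ Finset.range k := Finset.range_subset_range.2 hk
    calc S k = S m + ∑ i ∈ Finset.range k \ Finset.range m, a i := by
            rw [hS_def]; simp only
            rw [← Finset.sum_sdiff hsub]; ring
      _ ≤ S m + 0 := by
            gcongr
            exact Finset.sum_nonpos fun i _ => ha i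
      _ = S m := add_zero _
  have hazero : ∀ i, a i = 0 := by
    intro j
    have h1 : S (j + 1) ≤ a j := by
      have hmem : j ∈ Finset.range (j + 1) := Finset.self_mem_range_succ j
      calc S (j + 1) = a j + ∑ i ∈ Finset.range (j + 1) \ {j}, a i := by
            rw [hS_def]; simp only
            rw [← Finset.sum_sdiff (Finset.singleton_subset_iff.2 hmem)]
            simp [add_comm]
        _ ≤ a j + 0 := by gcongr; exact Finset.sum_nonpos fun i _ => ha i
        _ = a j := add_zero _
    exact le_antisymm (ha j) (le_trans (hSnonneg (j + 1)) h1)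
  have hne0 : ∀ i, i ≠ i₀ → xs i = 0 := by
    intro i hi
    obtain ⟨ε, hε, hball⟩ := Metric.isOpen_iff.1 isOpen_interior z (hzi i hi)
    have hkey : ∀ w : EuclideanSpace ℝ (Fin n), (inner ℝ (xs i) w : ℝ) ≤ 0 := by
      intro w
      set t : ℝ := ε / (‖w‖ + 1) with ht_def
      have ht : 0 < t := div_pos hε (by positivity)
      have hu : z + t • w ∈ Ω i := by
        apply interior_subset
        apply hball
        rw [Metric.mem_ball, dist_eq_norm]
        have : ‖z + t • w - z‖ = t * ‖w‖ := by
          simp [norm_smul, abs_of_pos ht]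
        rw [this]
        calc t * ‖w‖ < t * (‖w‖ + 1) := by
              exact mul_lt_mul_of_pos_left (by linarith) ht
          _ = ε := by
              rw [ht_def]; field_simp
      have := hxs i (z + t • w) hu
      have heq : (inner ℝ (xs i) (z + t • w - xb) : ℝ) = a i + t * inner ℝ (xs i) w := by
        have : z + t • w - xb = (z - xb) + t • w := by abel
        rw [this, inner_add_right, real_inner_smul_right, ha_def]
      rw [heq, hazero i] at this
      nlinarith
    have := hkey (xs i)
    exact (real_inner_self_nonpos).1 this
  have hi₀ : xs i₀ = 0 := by
    have hev : ∀ᶠ m in atTop, (∑ i ∈ Finset.range m, xs i) = xs i₀ := by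
      refine eventually_atTop.2 ⟨i₀ + 1, fun m hm => ?_⟩
      rw [Finset.sum_eq_single i₀]
      · intro b hb hbne; exact hne0 b hbne
      · intro h; exact absurd (Finset.mem_range.2 (by omega)) h
    have : Tendsto (fun _ : ℕ => xs i₀) atTop (nhds (0 : EuclideanSpace ℝ (Fin n))) :=
      hsum.congr' hev
    exact tendsto_nhds_unique tendsto_const_nhds this
  intro i
  by_cases hi : i = i₀
  · subst hi; exact hi₀
  · exact hne0 i hi
end
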